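/- arXiv:1705.03835 — 8 statements merged into one kernel-verified Lean document; each statement's English description precedes it below -/
import Mathlib

section
/- Let q be a prime power and let v, k, t, m be integers with 0 ≤ t ≤ k ≤ v and k−t ≤ m ≤ v. Let W be a fixed m-dimensional subspace of 𝔽_q^v. Then the number of k-dimensional subspaces U of 𝔽_q^v with dim(U ∩ W) ≥ k−t equals Σ_{i=0}^{t} q^{(m+i−k)·i} · [m, k−i]_q · [v−m, i]_q, where any summand in which a Gaussian binomial factor is zero (i.e. with k−i > m or i > v−m) is understood to be zero. -/
open Finset Submodule Module

section Greedy

variable {F : Type*} [Field F] {V : Type*} [AddCommGroup V] [Module F V]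

/-- Greedy tuples: values in `C`, each new vector outside `A ⊔ span(previous)`. -/
def Gr (A C : Submodule F V) {n : ℕ} (f : Fin n → V) : Prop :=
  ∀ l, f l ∈ C ∧ f l ∉ A ⊔ Submodule.span F (f '' Set.Iio l)

lemma range_snoc' {β : Type*} {n : ℕ} (f : Fin n → β) (x : β) :
    Set.range (Fin.snoc f x : Fin (n+1) → β) = insert x (Set.range f) := by
  ext y
  simp only [Set.mem_range, Set.mem_insert_iff]
  constructor
  · rintro ⟨j, rfl⟩
    induction j using Fin.lastCases with
    | last => left; simp
    | cast i => right; exact ⟨i, by simp⟩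
  · rintro (rfl | ⟨j, rfl⟩)
    · exact ⟨Fin.last n, by simp⟩
    · exact ⟨j.castSucc, by simp⟩

lemma snoc_image_Iio_castSucc {β : Type*} {n : ℕ} (f : Fin n → β) (x : β) (i : Fin n) :
    (Fin.snoc f x : Fin (n+1) → β) '' Set.Iio i.castSucc = f '' Set.Iio i := by
  ext y
  simp only [Set.mem_image, Set.mem_Iio]
  constructor
  · rintro ⟨j, hj, rfl⟩
    have hjn : (j : ℕ) < n := lt_of_lt_of_le (by exact_mod_cast hj) (by omega)
    have hc : (⟨(j : ℕ), hjn⟩ : Fin n).castSucc = j := by ext; simp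
    refine ⟨⟨j, hjn⟩, ?_, ?_⟩
    · rw [← Fin.castSucc_lt_castSucc_iff, hc]; exact hj
    · have h2 := Fin.snoc_castSucc (α := fun _ => β) (p := f) (x := x) (i := ⟨j, hjn⟩)
      rw [hc] at h2
      exact h2.symm
  · rintro ⟨j, hj, rfl⟩
    exact ⟨j.castSucc, Fin.castSucc_lt_castSucc_iff.2 hj, by simp⟩

lemma snoc_image_Iio_last {β : Type*} {n : ℕ} (f : Fin n → β) (x : β) :
    (Fin.snoc f x : Fin (n+1) → β) '' Set.Iio (Fin.last n) = Set.range f := by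
  ext y
  simp only [Set.mem_image, Set.mem_Iio, Set.mem_range]
  constructor
  · rintro ⟨j, hj, rfl⟩
    obtain ⟨j', rfl⟩ := Fin.exists_castSucc_eq.2 (Fin.ne_last_of_lt hj)
    exact ⟨j', by simp⟩
  · rintro ⟨j, rfl⟩
    exact ⟨j.castSucc, Fin.castSucc_lt_last j, by simp⟩

lemma Gr_snoc {A C : Submodule F V} {n : ℕ} {f : Fin n → V} {x : V} :
    Gr A C (Fin.snoc f x) ↔ Gr A C f ∧ (x ∈ C ∧ x ∉ A ⊔ Submodule.span F (Set.range f)) := by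
  constructor
  · intro h
    refine ⟨fun l => ?_, ?_⟩
    · have := h l.castSucc
      rwa [Fin.snoc_castSucc, snoc_image_Iio_castSucc] at this
    · have := h (Fin.last n)
      rwa [Fin.snoc_last, snoc_image_Iio_last] at this
  · rintro ⟨h1, h2⟩ l
    induction l using Fin.lastCases with
    | last => rw [Fin.snoc_last, snoc_image_Iio_last]; exact h2
    | cast i => rw [Fin.snoc_castSucc, snoc_image_Iio_castSucc]; exact h1 i

lemma Gr.range_subset {A C : Submodule F V} {n : ℕ} {f : Fin n → V} (h : Gr A C f) :
    Set.range f ⊆ (C : Set V) := by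
  rintro y ⟨l, rfl⟩; exact (h l).1

lemma Gr.span_le {A C : Submodule F V} {n : ℕ} {f : Fin n → V} (h : Gr A C f) :
    Submodule.span F (Set.range f) ≤ C :=
  Submodule.span_le.2 h.range_subset

lemma Gr.mono {A C C' : Submodule F V} {n : ℕ} {f : Fin n → V} (hCC : C ≤ C')
    (h : Gr A C f) : Gr A C' f :=
  fun l => ⟨hCC (h l).1, (h l).2⟩

lemma Gr.anti {A A' C : Submodule F V} {n : ℕ} {f : Fin n → V} (hAA : A' ≤ A)
    (h : Gr A C f) : Gr A' C f :=
  fun l => ⟨(h l).1, fun hm => (h l).2 (sup_le_sup_right hAA _ hm)⟩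

lemma finrank_sup_singleton [FiniteDimensional F V] {S : Submodule F V} {x : V}
    (hx : x ∉ S) : finrank F ↥(S ⊔ Submodule.span F {x}) = finrank F ↥S + 1 := by
  have hx0 : x ≠ 0 := fun h => hx (h ▸ S.zero_mem)
  have h1 : finrank F ↥(Submodule.span F {x} : Submodule F V) = 1 :=
    finrank_span_singleton hx0
  have h2 : S ⊓ Submodule.span F {x} = ⊥ := by
    rw [eq_bot_iff]
    rintro y hy
    have hyS : y ∈ S := hy.1
    obtain ⟨c, rfl⟩ := Submodule.mem_span_singleton.1 hy.2
    rcases eq_or_ne c 0 with rfl | hc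
    · simp
    · exact absurd (by simpa [smul_smul, inv_mul_cancel₀ hc] using S.smul_mem c⁻¹ hyS) hx
  have h3 := Submodule.finrank_sup_add_finrank_inf_eq S (Submodule.span F {x})
  rw [h2, h1] at h3
  simp only [finrank_bot] at h3
  omega

lemma Gr.finrank_sup [FiniteDimensional F V] {A C : Submodule F V} :
    ∀ {n : ℕ} {f : Fin n → V}, Gr A C f →
      finrank F ↥(A ⊔ Submodule.span F (Set.range f)) = finrank F ↥A + n := by
  intro n
  induction n with
  | zero =>
    intro f _
    rw [Set.range_eq_empty f, Submodule.span_empty, sup_bot_eq, Nat.add_zero]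
  | succ n ih =>
    intro f h
    rw [← Fin.snoc_init_self f] at h
    obtain ⟨h1, hxC, hx⟩ := Gr_snoc.1 h
    have hr : Set.range f = insert (f (Fin.last n)) (Set.range (Fin.init f)) := by
      conv_lhs => rw [← Fin.snoc_init_self f]
      rw [range_snoc']
    have hsup : A ⊔ Submodule.span F (Set.range f) =
        (A ⊔ Submodule.span F (Set.range (Fin.init f))) ⊔
          Submodule.span F {f (Fin.last n)} := by
      rw [hr, Submodule.span_insert,
        sup_comm (Submodule.span F {f (Fin.last n)}) (Submodule.span F (Set.range (Fin.init f))),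
        ← sup_assoc]
    rw [hsup, finrank_sup_singleton hx, ih h1]
    omega

end Greedy

section Card

lemma nat_card_sigma {ι : Type*} [Fintype ι] (f : ι → Type*) [∀ i, Finite (f i)] :
    Nat.card (Σ i, f i) = ∑ i, Nat.card (f i) := by
  haveI : ∀ i, Fintype (f i) := fun i => Fintype.ofFinite _
  simp only [Nat.card_eq_fintype_card, Fintype.card_sigma]

variable {F : Type*} [Field F] [Fintype F] {V : Type*} [AddCommGroup V] [Module F V]
  [FiniteDimensional F V] [Fintype V]

lemma nat_card_submodule (D : Submodule F V) :
    Nat.card ↥D = Fintype.card F ^ finrank F ↥D := by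
  haveI : Fintype ↥D := Fintype.ofFinite _
  rw [Nat.card_eq_fintype_card]
  exact card_eq_pow_finrank

lemma card_sub_compl {B C : Submodule F V} (hBC : B ≤ C) {b dC : ℕ}
    (hb : finrank F ↥B = b) (hC : finrank F ↥C = dC) :
    Nat.card {x : V // x ∈ C ∧ x ∉ B} = Fintype.card F ^ dC - Fintype.card F ^ b := by
  classical
  have h1 : Nat.card {x : V // x ∈ C ∧ x ∉ B}
      = ((C : Set V) \ (B : Set V)).ncard := by
    rw [← Nat.card_coe_set_eq]
    exact Nat.card_congr (Equiv.subtypeEquivRight (fun x => by simp [Set.mem_diff]))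
  rw [h1, Set.ncard_diff (by exact_mod_cast hBC)]
  have h2 : (C : Set V).ncard = Fintype.card F ^ dC := by
    rw [← Nat.card_coe_set_eq, ← hC]
    exact nat_card_submodule C
  have h3 : (B : Set V).ncard = Fintype.card F ^ b := by
    rw [← Nat.card_coe_set_eq, ← hb]
    exact nat_card_submodule B
  rw [h2, h3]

lemma Gr_card {A C : Submodule F V} (hAC : A ≤ C) {a dC : ℕ}
    (ha : finrank F ↥A = a) (hC : finrank F ↥C = dC) :
    ∀ n, Nat.card {f : Fin n → V // Gr A C f} =
        ∏ l ∈ Finset.range n, (Fintype.card F ^ dC - Fintype.card F ^ (a + l)) := by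
  intro n
  induction n with
  | zero =>
    rw [prod_range_zero]
    haveI : Unique {f : Fin 0 → V // Gr A C f} :=
      ⟨⟨⟨fun i => i.elim0, fun l => l.elim0⟩⟩, fun f => Subtype.ext (funext fun l => l.elim0)⟩
    exact Nat.card_unique
  | succ n ih =>
    have hb : Function.Bijective
        (fun p : (Σ g : {f : Fin n → V // Gr A C f},
            {x : V // x ∈ C ∧ x ∉ A ⊔ Submodule.span F (Set.range g.1)}) =>
          (⟨Fin.snoc p.1.1 p.2.1, Gr_snoc.2 ⟨p.1.2, p.2.2⟩⟩ :
            {f : Fin (n+1) → V // Gr A C f})) := by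
      constructor
      · rintro ⟨⟨g, hg⟩, ⟨x, hx⟩⟩ ⟨⟨g', hg'⟩, ⟨x', hx'⟩⟩ hEq
        have hEq' : (Fin.snoc g x : Fin (n+1) → V) = Fin.snoc g' x' := congrArg Subtype.val hEq
        have hgg : g = g' := by
          have := congrArg Fin.init hEq'
          rwa [Fin.init_snoc, Fin.init_snoc] at this
        have hxx : x = x' := by
          have := congrArg (fun f => f (Fin.last n)) hEq'
          simpa using this
        subst hgg; subst hxx; rfl
      · rintro ⟨f, hf⟩
        have hf' : Gr A C (Fin.snoc (Fin.init f) (f (Fin.last n))) := by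
          rwa [Fin.snoc_init_self]
        obtain ⟨h1, h2⟩ := Gr_snoc.1 hf'
        exact ⟨⟨⟨Fin.init f, h1⟩, ⟨f (Fin.last n), h2⟩⟩, Subtype.ext (Fin.snoc_init_self f)⟩
    rw [← Nat.card_eq_of_bijective _ hb]
    haveI : Fintype {f : Fin n → V // Gr A C f} := Fintype.ofFinite _
    rw [nat_card_sigma]
    have hfib : ∀ g : {f : Fin n → V // Gr A C f},
        Nat.card {x : V // x ∈ C ∧ x ∉ A ⊔ Submodule.span F (Set.range g.1)}
          = Fintype.card F ^ dC - Fintype.card F ^ (a + n) := by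
      intro g
      refine card_sub_compl (sup_le hAC g.2.span_le) ?_ hC
      have := g.2.finrank_sup
      rw [ha] at this
      exact this
    rw [Finset.sum_congr rfl (fun g _ => hfib g), Finset.sum_const, smul_eq_mul, card_univ,
      show Fintype.card {f : Fin n → V // Gr A C f} = Nat.card {f : Fin n → V // Gr A C f}
        from Nat.card_eq_fintype_card.symm, ih, prod_range_succ]

end Card

section Geom

variable {F : Type*} [Field F] {V : Type*} [AddCommGroup V] [Module F V] [FiniteDimensional F V]

lemma transferG {U W : Submodule F V} {i : ℕ} {g : Fin i → V} (h : Gr (U ⊓ W) U g) :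
    Gr W ⊤ g := by
  intro l
  refine ⟨trivial, fun hmem => ?_⟩
  set S := Submodule.span F (g '' Set.Iio l) with hS
  have hSU : S ≤ U := Submodule.span_le.2 (by
    rintro y ⟨l', _, rfl⟩; exact (h l').1)
  have h2 : g l ∈ (S ⊔ W) ⊓ U := ⟨by rwa [sup_comm S W], (h l).1⟩
  rw [sup_inf_assoc_of_le W hSU] at h2
  refine (h l).2 ?_
  have he : (U ⊓ W) ⊔ S = S ⊔ W ⊓ U := by rw [inf_comm U W, sup_comm]
  rw [he]
  exact h2

lemma span_determined {U W : Submodule F V} {k j i : ℕ} (hUk : finrank F ↥U = k)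
    (hUW : finrank F ↥(U ⊓ W) = j) (hk : j + i = k)
    {x : Fin j → V} {g : Fin i → V} (hx : Gr ⊥ (U ⊓ W) x) (hg : Gr (U ⊓ W) U g) :
    U = Submodule.span F (Set.range x) ⊔ Submodule.span F (Set.range g) := by
  have h1 : Submodule.span F (Set.range x) = U ⊓ W := by
    apply Submodule.eq_of_le_of_finrank_le hx.span_le
    have h := hx.finrank_sup
    rw [bot_sup_eq, finrank_bot] at h
    omega
  have h2 : (U ⊓ W) ⊔ Submodule.span F (Set.range g) = U := by
    apply Submodule.eq_of_le_of_finrank_le (sup_le inf_le_left hg.span_le)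
    have h := hg.finrank_sup
    omega
  calc U = (U ⊓ W) ⊔ Submodule.span F (Set.range g) := h2.symm
  _ = Submodule.span F (Set.range x) ⊔ Submodule.span F (Set.range g) := by rw [h1]

lemma span_analysis {W : Submodule F V} {m j i : ℕ} (hW : finrank F ↥W = m)
    {x : Fin j → V} {g : Fin i → V} (hx : Gr ⊥ W x) (hg : Gr W ⊤ g) :
    finrank F ↥(Submodule.span F (Set.range x) ⊔ Submodule.span F (Set.range g)) = j + i ∧
    (Submodule.span F (Set.range x) ⊔ Submodule.span F (Set.range g)) ⊓ W
        = Submodule.span F (Set.range x) := by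
  set Sx := Submodule.span F (Set.range x) with hSxdef
  set Sg := Submodule.span F (Set.range g) with hSgdef
  set U := Sx ⊔ Sg with hUdef
  have hSx : finrank F ↥Sx = j := by
    have h := hx.finrank_sup
    rw [bot_sup_eq, finrank_bot, ← hSxdef] at h
    omega
  have hgbot : Gr ⊥ ⊤ g := hg.anti bot_le
  have hSg : finrank F ↥Sg = i := by
    have h := hgbot.finrank_sup
    rw [bot_sup_eq, finrank_bot, ← hSgdef] at h
    omega
  have hWSg : finrank F ↥(W ⊔ Sg) = m + i := by
    have h := hg.finrank_sup
    rw [hW, ← hSgdef] at h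
    exact h
  have hSxW : Sx ≤ W := hx.span_le
  have hUW_sup : U ⊔ W = W ⊔ Sg := by
    calc U ⊔ W = Sx ⊔ (Sg ⊔ W) := by rw [hUdef, sup_assoc]
    _ = Sx ⊔ (W ⊔ Sg) := by rw [sup_comm Sg W]
    _ = (Sx ⊔ W) ⊔ Sg := by rw [← sup_assoc]
    _ = W ⊔ Sg := by rw [sup_eq_right.2 hSxW]
  have hform := Submodule.finrank_sup_add_finrank_inf_eq U W
  rw [hUW_sup, hWSg, hW] at hform
  have hle : finrank F ↥U ≤ j + i := by
    have h := Submodule.finrank_sup_add_finrank_inf_eq Sx Sg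
    rw [hSx, hSg, ← hUdef] at h
    omega
  have hle2 : Sx ≤ U ⊓ W := le_inf le_sup_left hSxW
  have hgeJ : j ≤ finrank F ↥(U ⊓ W) := by
    have h := Submodule.finrank_mono hle2
    rw [hSx] at h
    exact h
  have hfr : finrank F ↥U = j + i := by omega
  refine ⟨hfr, ?_⟩
  have : finrank F ↥(U ⊓ W) ≤ finrank F ↥Sx := by rw [hSx]; omega
  exact (Submodule.eq_of_le_of_finrank_le hle2 this).symm

end Geom

section MainCount

variable {F : Type*} [Field F] [Fintype F] {V : Type*} [AddCommGroup V] [Module F V]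
  [FiniteDimensional F V] [Fintype V]

lemma main_count {v k j i m : ℕ} (hv : finrank F V = v)
    (W : Submodule F V) (hW : finrank F ↥W = m) (hk : j + i = k) :
    Nat.card {U : Submodule F V // finrank F ↥U = k ∧ finrank F ↥(U ⊓ W) = j} *
      ((∏ l ∈ Finset.range j, (Fintype.card F ^ j - Fintype.card F ^ l)) *
       (∏ l ∈ Finset.range i, (Fintype.card F ^ k - Fintype.card F ^ (j + l)))) =
    (∏ l ∈ Finset.range j, (Fintype.card F ^ m - Fintype.card F ^ l)) *
      (∏ l ∈ Finset.range i, (Fintype.card F ^ v - Fintype.card F ^ (m + l))) := by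
  classical
  haveI : Finite (Submodule F V) := Finite.of_injective _ SetLike.coe_injective
  set S := {U : Submodule F V // finrank F ↥U = k ∧ finrank F ↥(U ⊓ W) = j} with hSdef
  have key : ∀ p : (Σ U : S, {x : Fin j → V // Gr ⊥ (U.1 ⊓ W) x} ×
      {g : Fin i → V // Gr (U.1 ⊓ W) U.1 g}),
      Gr ⊥ W p.2.1.1 ∧ Gr W ⊤ p.2.2.1 :=
    fun p => ⟨p.2.1.2.mono inf_le_right, transferG p.2.2.2⟩
  set Φ : (Σ U : S, {x : Fin j → V // Gr ⊥ (U.1 ⊓ W) x} ×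
      {g : Fin i → V // Gr (U.1 ⊓ W) U.1 g}) →
      ({x : Fin j → V // Gr ⊥ W x} × {g : Fin i → V // Gr W ⊤ g}) :=
    fun p => (⟨p.2.1.1, (key p).1⟩, ⟨p.2.2.1, (key p).2⟩) with hΦ
  have hbij : Function.Bijective Φ := by
    constructor
    · rintro ⟨⟨U, hU1, hU2⟩, ⟨x, hx⟩, ⟨g, hg⟩⟩ ⟨⟨U', hU1', hU2'⟩, ⟨x', hx'⟩, ⟨g', hg'⟩⟩ hEq
      have hxx : x = x' := congrArg (fun z => z.1.1) hEq
      have hgg : g = g' := congrArg (fun z => z.2.1) hEq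
      subst hxx
      subst hgg
      have hUU : U = U' := by
        rw [span_determined hU1 hU2 hk hx hg, span_determined hU1' hU2' hk hx' hg']
      subst hUU
      rfl
    · rintro ⟨⟨x, hx⟩, ⟨g, hg⟩⟩
      obtain ⟨hfr, hinf⟩ := span_analysis hW hx hg
      set U := Submodule.span F (Set.range x) ⊔ Submodule.span F (Set.range g) with hUdef
      have hSxrank : finrank F ↥(Submodule.span F (Set.range x) : Submodule F V) = j := by
        have h := hx.finrank_sup
        rw [bot_sup_eq, finrank_bot] at h
        omega
      have hU1 : finrank F ↥U = k := by rw [hfr, hk]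
      have hU2 : finrank F ↥(U ⊓ W) = j := by rw [hinf]; exact hSxrank
      refine ⟨⟨⟨U, hU1, hU2⟩, ⟨x, ?_⟩, ⟨g, ?_⟩⟩, rfl⟩
      · intro l
        refine ⟨?_, (hx l).2⟩
        rw [hinf]
        exact Submodule.subset_span ⟨l, rfl⟩
      · intro l
        refine ⟨Submodule.mem_sup_right (Submodule.subset_span ⟨l, rfl⟩), fun hmem => ?_⟩
        apply (hg l).2
        have hle : (U ⊓ W) ⊔ Submodule.span F (g '' Set.Iio l) ≤
            W ⊔ Submodule.span F (g '' Set.Iio l) :=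
          sup_le_sup_right inf_le_right _
        exact hle hmem
  have hcard := Nat.card_eq_of_bijective Φ hbij
  haveI : Fintype S := Fintype.ofFinite _
  rw [nat_card_sigma] at hcard
  have hfib : ∀ U : S, Nat.card ({x : Fin j → V // Gr ⊥ (U.1 ⊓ W) x} ×
      {g : Fin i → V // Gr (U.1 ⊓ W) U.1 g})
      = (∏ l ∈ Finset.range j, (Fintype.card F ^ j - Fintype.card F ^ l)) *
        (∏ l ∈ Finset.range i, (Fintype.card F ^ k - Fintype.card F ^ (j + l))) := by
    intro U
    rw [Nat.card_prod]
    congr 1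
    · have h := Gr_card (A := (⊥ : Submodule F V)) (C := U.1 ⊓ W) bot_le (finrank_bot F V) U.2.2 j
      simpa using h
    · exact Gr_card (A := U.1 ⊓ W) (C := U.1) inf_le_left U.2.2 U.2.1 i
  rw [Finset.sum_congr rfl (fun U _ => hfib U), Finset.sum_const, smul_eq_mul, card_univ,
    show Fintype.card S = Nat.card S from Nat.card_eq_fintype_card.symm] at hcard
  rw [hcard, Nat.card_prod]
  congr 1
  · have h := Gr_card (A := (⊥ : Submodule F V)) (C := W) bot_le (finrank_bot F V) hW j
    simpa using h
  · have h := Gr_card (A := W) (C := (⊤ : Submodule F V)) (dC := v) le_top hW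
      (by rw [finrank_top, hv]) i
    exact h

end MainCount

/-- The Gaussian binomial coefficient `[a, b]_q = ∏_{i=1}^{b} (q^{a-b+i}-1)/(q^i-1)`
for `0 ≤ b ≤ a`, and `0` whenever `b > a`, as a rational number. -/
noncomputable def gaussQ (q a b : ℕ) : ℚ :=
  if b ≤ a then ∏ i ∈ Finset.range b, ((q : ℚ) ^ (a - b + (i + 1)) - 1) / ((q : ℚ) ^ (i + 1) - 1)
  else 0

section Algebra

lemma gauss_eq_prod (q a n : ℕ) (hn : n ≤ a) :
    gaussQ q a n = ∏ l ∈ Finset.range n, (((q:ℚ)^(a-l) - 1) / ((q:ℚ)^(n-l) - 1)) := by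
  rw [gaussQ, if_pos hn, ← Finset.prod_range_reflect]
  refine Finset.prod_congr rfl fun l hl => ?_
  rw [Finset.mem_range] at hl
  have e1 : a - n + (n - 1 - l + 1) = a - l := by omega
  have e2 : n - 1 - l + 1 = n - l := by omega
  rw [e1, e2]

lemma ratio1 (q : ℕ) (hq : 2 ≤ q) (j m : ℕ) (hjm : j ≤ m) :
    (∏ l ∈ Finset.range j, ((q:ℚ)^m - (q:ℚ)^l)) / (∏ l ∈ Finset.range j, ((q:ℚ)^j - (q:ℚ)^l))
      = gaussQ q m j := by
  rw [gauss_eq_prod q m j hjm, ← Finset.prod_div_distrib]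
  refine Finset.prod_congr rfl fun l hl => ?_
  rw [Finset.mem_range] at hl
  have hq0 : (q:ℚ) ≠ 0 := Nat.cast_ne_zero.2 (by omega)
  have h1 : (q:ℚ)^m - (q:ℚ)^l = (q:ℚ)^l * ((q:ℚ)^(m-l) - 1) := by
    rw [mul_sub, mul_one, ← pow_add]
    congr 2
    omega
  have h2 : (q:ℚ)^j - (q:ℚ)^l = (q:ℚ)^l * ((q:ℚ)^(j-l) - 1) := by
    rw [mul_sub, mul_one, ← pow_add]
    congr 2
    omega
  rw [h1, h2, mul_div_mul_left _ _ (pow_ne_zero l hq0)]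

lemma ratio2 (q : ℕ) (hq : 2 ≤ q) (v k m j i : ℕ) (hk : j + i = k) (hjm : j ≤ m)
    (hmi : m + i ≤ v) :
    (∏ l ∈ Finset.range i, ((q:ℚ)^v - (q:ℚ)^(m+l))) /
        (∏ l ∈ Finset.range i, ((q:ℚ)^k - (q:ℚ)^(j+l)))
      = (q:ℚ)^((m-j)*i) * gaussQ q (v-m) i := by
  rw [gauss_eq_prod q (v-m) i (by omega), ← Finset.prod_div_distrib]
  have hfac : ∀ l ∈ Finset.range i, ((q:ℚ)^v - (q:ℚ)^(m+l)) / ((q:ℚ)^k - (q:ℚ)^(j+l))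
      = (q:ℚ)^(m-j) * (((q:ℚ)^(v-m-l) - 1) / ((q:ℚ)^(i-l) - 1)) := by
    intro l hl
    rw [Finset.mem_range] at hl
    have hq0 : (q:ℚ) ≠ 0 := Nat.cast_ne_zero.2 (by omega)
    have h1 : (q:ℚ)^v - (q:ℚ)^(m+l) = (q:ℚ)^(j+l) * ((q:ℚ)^(m-j) * ((q:ℚ)^(v-m-l) - 1)) := by
      have e1 : (q:ℚ)^v = (q:ℚ)^(j+l) * ((q:ℚ)^(m-j) * (q:ℚ)^(v-m-l)) := by
        rw [← pow_add, ← pow_add]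
        congr 1
        omega
      have e2 : (q:ℚ)^(m+l) = (q:ℚ)^(j+l) * (q:ℚ)^(m-j) := by
        rw [← pow_add]
        congr 1
        omega
      rw [e1, e2]
      ring
    have h2 : (q:ℚ)^k - (q:ℚ)^(j+l) = (q:ℚ)^(j+l) * ((q:ℚ)^(i-l) - 1) := by
      have e1 : (q:ℚ)^k = (q:ℚ)^(j+l) * (q:ℚ)^(i-l) := by
        rw [← pow_add]
        congr 1
        omega
      rw [e1]
      ring
    rw [h1, h2, mul_div_mul_left _ _ (pow_ne_zero _ hq0), mul_div_assoc]
  rw [Finset.prod_congr rfl hfac, Finset.prod_mul_distrib, Finset.prod_const,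
    Finset.card_range, ← pow_mul]

end Algebra

/-- Lemma 4 (counting subspaces with large intersection with a fixed subspace):
the number of `k`-dimensional subspaces `U` of `F_q^v` with `dim(U ∩ W) ≥ k - t`
equals `∑_{i=0}^{t} q^{(m+i-k)i} [m, k-i]_q [v-m, i]_q`. -/
theorem stmt0 (q : ℕ) (F : Type) [Field F] [Fintype F] (hF : Fintype.card F = q)
    (v k t m : ℕ) (htk : t ≤ k) (hkv : k ≤ v) (hm1 : k - t ≤ m) (hm2 : m ≤ v)
    (W : Submodule F (Fin v → F)) (hW : Module.finrank F ↥W = m) :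
    (Nat.card {U : Submodule F (Fin v → F) //
        Module.finrank F ↥U = k ∧ k - t ≤ Module.finrank F ↥(U ⊓ W)} : ℚ) =
      ∑ i ∈ Finset.range (t + 1),
        (q : ℚ) ^ ((m + i - k) * i) * gaussQ q m (k - i) * gaussQ q (v - m) i := by
  classical
  subst hF
  set q := Fintype.card F with hqdef
  have hq2 : 2 ≤ q := Fintype.one_lt_card
  have hv : finrank F (Fin v → F) = v := Module.finrank_fin_fun F
  haveI : Finite (Submodule F (Fin v → F)) := Finite.of_injective _ SetLike.coe_injective
  set N : ℕ → ℕ := fun i => Nat.card {U : Submodule F (Fin v → F) //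
      finrank F ↥U = k ∧ finrank F ↥(U ⊓ W) = k - i} with hN
  -- Step A : partition according to the value of `finrank (U ⊓ W)`
  have hpart : Nat.card {U : Submodule F (Fin v → F) //
      finrank F ↥U = k ∧ k - t ≤ finrank F ↥(U ⊓ W)} = ∑ i ∈ Finset.range (t+1), N i := by
    set S := {U : Submodule F (Fin v → F) //
      finrank F ↥U = k ∧ k - t ≤ finrank F ↥(U ⊓ W)} with hS
    have hbound : ∀ U : S, finrank F ↥(U.1 ⊓ W) ≤ k := fun U =>
      le_trans (Submodule.finrank_mono inf_le_left) (le_of_eq U.2.1)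
    set φ : S → Fin (t+1) := fun U => ⟨k - finrank F ↥(U.1 ⊓ W), by
      have h1 := hbound U
      have h2 := U.2.2
      omega⟩ with hφ
    have h1 : Nat.card S = ∑ b : Fin (t+1), Nat.card {a : S // φ a = b} := by
      rw [← nat_card_sigma]
      exact (Nat.card_congr (Equiv.sigmaFiberEquiv φ)).symm
    have h2 : ∀ b : Fin (t+1), Nat.card {a : S // φ a = b} = N (b : ℕ) := by
      intro b
      have hbt : (b : ℕ) ≤ t := by omega
      apply Nat.card_congr
      exact {
        toFun := fun a => ⟨a.1.1, a.1.2.1, by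
          have h3 : k - finrank F ↥(a.1.1 ⊓ W) = (b : ℕ) := congrArg Fin.val a.2
          have h4 := hbound a.1
          have h5 := a.1.2.2
          omega⟩
        invFun := fun U => ⟨⟨U.1, U.2.1, by
          have h6 := U.2.2
          omega⟩, by
          apply Fin.val_injective
          have h6 := U.2.2
          have h7 : finrank F ↥(U.1 ⊓ W) ≤ k := by omega
          show k - finrank F ↥(U.1 ⊓ W) = (b : ℕ)
          omega⟩
        left_inv := fun a => rfl
        right_inv := fun U => rfl }
    rw [h1, Finset.sum_congr rfl (fun b _ => h2 b)]
    exact Fin.sum_univ_eq_sum_range (fun i => N i) (t+1)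
  rw [hpart, Nat.cast_sum]
  refine Finset.sum_congr rfl fun i hi => ?_
  rw [Finset.mem_range] at hi
  have hit : i ≤ t := by omega
  by_cases h1 : k - i ≤ m
  · by_cases h2 : i ≤ v - m
    · -- main case
      set j := k - i with hj
      have hk : j + i = k := by omega
      have hjm : j ≤ m := h1
      have hmi : m + i ≤ v := by omega
      have hcount := main_count (F := F) (V := Fin v → F) (j := j) (i := i) hv W hW hk
      have hNi : N i = Nat.card {U : Submodule F (Fin v → F) //
          finrank F ↥U = k ∧ finrank F ↥(U ⊓ W) = j} := rfl
      rw [← hNi] at hcount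
      have hc1 : 0 < ∏ l ∈ Finset.range j, (q^j - q^l) := by
        refine Finset.prod_pos fun l hl => ?_
        rw [Finset.mem_range] at hl
        have := pow_lt_pow_right₀ (a := q) (by omega) hl
        omega
      have hc2 : 0 < ∏ l ∈ Finset.range i, (q^k - q^(j+l)) := by
        refine Finset.prod_pos fun l hl => ?_
        rw [Finset.mem_range] at hl
        have := pow_lt_pow_right₀ (a := q) (by omega) (show j + l < k by omega)
        omega
      have c1Q : ((∏ l ∈ Finset.range j, (q^j - q^l) : ℕ) : ℚ)
          = ∏ l ∈ Finset.range j, ((q:ℚ)^j - (q:ℚ)^l) := by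
        rw [Nat.cast_prod]
        refine Finset.prod_congr rfl fun l hl => ?_
        rw [Finset.mem_range] at hl
        rw [Nat.cast_sub (Nat.pow_le_pow_right (by omega) (by omega))]
        push_cast
        ring
      have c2Q : ((∏ l ∈ Finset.range i, (q^k - q^(j+l)) : ℕ) : ℚ)
          = ∏ l ∈ Finset.range i, ((q:ℚ)^k - (q:ℚ)^(j+l)) := by
        rw [Nat.cast_prod]
        refine Finset.prod_congr rfl fun l hl => ?_
        rw [Finset.mem_range] at hl
        rw [Nat.cast_sub (Nat.pow_le_pow_right (by omega) (show j + l ≤ k by omega))]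
        push_cast
        ring
      have d1Q : ((∏ l ∈ Finset.range j, (q^m - q^l) : ℕ) : ℚ)
          = ∏ l ∈ Finset.range j, ((q:ℚ)^m - (q:ℚ)^l) := by
        rw [Nat.cast_prod]
        refine Finset.prod_congr rfl fun l hl => ?_
        rw [Finset.mem_range] at hl
        rw [Nat.cast_sub (Nat.pow_le_pow_right (by omega) (show l ≤ m by omega))]
        push_cast
        ring
      have d2Q : ((∏ l ∈ Finset.range i, (q^v - q^(m+l)) : ℕ) : ℚ)
          = ∏ l ∈ Finset.range i, ((q:ℚ)^v - (q:ℚ)^(m+l)) := by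
        rw [Nat.cast_prod]
        refine Finset.prod_congr rfl fun l hl => ?_
        rw [Finset.mem_range] at hl
        rw [Nat.cast_sub (Nat.pow_le_pow_right (by omega) (show m + l ≤ v by omega))]
        push_cast
        ring
      have hQ := congrArg (Nat.cast : ℕ → ℚ) hcount
      rw [Nat.cast_mul, Nat.cast_mul, Nat.cast_mul, c1Q, c2Q, d1Q, d2Q] at hQ
      have hden1 : (∏ l ∈ Finset.range j, ((q:ℚ)^j - (q:ℚ)^l)) ≠ 0 := by
        rw [← c1Q]
        exact_mod_cast hc1.ne'
      have hden2 : (∏ l ∈ Finset.range i, ((q:ℚ)^k - (q:ℚ)^(j+l))) ≠ 0 := by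
        rw [← c2Q]
        exact_mod_cast hc2.ne'
      have hNval : (N i : ℚ) = (∏ l ∈ Finset.range j, ((q:ℚ)^m - (q:ℚ)^l)) /
            (∏ l ∈ Finset.range j, ((q:ℚ)^j - (q:ℚ)^l)) *
          ((∏ l ∈ Finset.range i, ((q:ℚ)^v - (q:ℚ)^(m+l))) /
            (∏ l ∈ Finset.range i, ((q:ℚ)^k - (q:ℚ)^(j+l)))) := by
        rw [div_mul_div_comm, eq_div_iff (mul_ne_zero hden1 hden2)]
        exact hQ
      rw [hNval, ratio1 q hq2 j m hjm, ratio2 q hq2 v k m j i hk hjm hmi]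
      have hmj : m - j = m + i - k := by omega
      rw [hmj]
      ring
    · -- `i > v - m` : both sides vanish
      have hempty : IsEmpty {U : Submodule F (Fin v → F) //
          finrank F ↥U = k ∧ finrank F ↥(U ⊓ W) = k - i} := by
        constructor
        rintro ⟨U, hU1, hU2⟩
        have h3 := Submodule.finrank_sup_add_finrank_inf_eq U W
        rw [hU1, hU2, hW] at h3
        have h4 := Submodule.finrank_le (R := F) (U ⊔ W)
        rw [hv] at h4
        omega
      haveI := hempty
      have hz : N i = 0 := Nat.card_of_isEmpty
      rw [hz, show gaussQ q (v - m) i = 0 from by rw [gaussQ, if_neg (by omega)]]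
      simp
  · -- `k - i > m` : both sides vanish
    have hempty : IsEmpty {U : Submodule F (Fin v → F) //
        finrank F ↥U = k ∧ finrank F ↥(U ⊓ W) = k - i} := by
      constructor
      rintro ⟨U, hU1, hU2⟩
      have h3 : finrank F ↥(U ⊓ W) ≤ m :=
        le_trans (Submodule.finrank_mono inf_le_right) (le_of_eq hW)
      omega
    haveI := hempty
    have hz : N i = 0 := Nat.card_of_isEmpty
    rw [hz, show gaussQ q m (k - i) = 0 from by rw [gaussQ, if_neg (by omega)]]
    simp
end

section
/- Let q be a prime power and let v, k, d be integers with 0 ≤ k < v, d even, and 2 ≤ d ≤ 2·min{k, v−k}. Then the inequality (q^k−1)² > (q^v−1)(q^{k−d/2}−1) holds if and only if k ≥ 1 and d = 2·min{k, v−k}. Moreover, if k ≥ 1 and d = 2·min{k, v−k}, then (q^k−q^{k−d/2})(q^v−1) / ((q^k−1)² − (q^v−1)(q^{k−d/2}−1)) = (q^v−1)/(q^{min{k,v−k}}−1). -/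
lemma aux1 (A E T : ℚ) (hA : A = 1 ∨ 2 ≤ A) (hE : 2 ≤ E) (hT : T = 1 ∨ 2 ≤ T) :
    (A * E - 1) ^ 2 > (A * E * E * T - 1) * (A - 1) ↔ (A = 1 ∨ T = 1) := by
  have hA1 : 1 ≤ A := by rcases hA with rfl | h; exacts [le_refl 1, by linarith]
  constructor
  · intro h
    by_contra hc
    push_neg at hc
    obtain ⟨h1, h2⟩ := hc
    have hA2 : 2 ≤ A := by rcases hA with rfl | h'; exacts [absurd rfl h1, h']
    have hT2 : 2 ≤ T := by rcases hT with rfl | h'; exacts [absurd rfl h2, h']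
    have hg : 0 < E*E*T*(A-1) - A*(E*E) + 2*E - 1 := by
      nlinarith [mul_nonneg (mul_nonneg (by linarith : (0:ℚ) ≤ T-2)
          (by positivity : (0:ℚ) ≤ E*E)) (by linarith : (0:ℚ) ≤ A-1),
        mul_nonneg (by linarith : (0:ℚ) ≤ A-2) (by positivity : (0:ℚ) ≤ E*E)]
    have h0 : (0:ℚ) < A := by linarith
    nlinarith [mul_pos h0 hg]
  · rintro (rfl | rfl)
    · nlinarith [mul_pos (show (0:ℚ) < E-1 by linarith) (show (0:ℚ) < E-1 by linarith)]
    · nlinarith [mul_pos (show (0:ℚ) < A by linarith)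
        (mul_pos (show (0:ℚ) < E-1 by linarith) (show (0:ℚ) < E-1 by linarith))]

lemma aux2 (A E T : ℚ) (hA : 1 ≤ A) (hE : 2 ≤ E) (hT : 1 ≤ T) (h : A = 1 ∨ T = 1) :
    (A*E - A) * (A*E*E*T - 1) / ((A*E - 1)^2 - (A*E*E*T - 1)*(A - 1)) = (A*E*E*T - 1)/(E - 1) := by
  have hE1 : (0:ℚ) < E - 1 := by linarith
  rcases h with rfl | rfl
  · have hD : (0:ℚ) < (1*E - 1)^2 - (1*E*E*T - 1)*((1:ℚ) - 1) := by nlinarith [mul_pos hE1 hE1]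
    rw [div_eq_div_iff hD.ne' hE1.ne']
    ring
  · have hD : (0:ℚ) < (A*E - 1)^2 - (A*E*E*1 - 1)*(A - 1) := by
      nlinarith [mul_pos (show (0:ℚ) < A by linarith) (mul_pos hE1 hE1)]
    rw [div_eq_div_iff hD.ne' hE1.ne']
    ring

/-- Proposition 1 (applicability of the Johnson type bound I): for a prime power `q` and
`0 ≤ k < v`, `d` even with `2 ≤ d ≤ 2 min{k, v-k}`, the condition
`(q^k-1)² > (q^v-1)(q^{k-d/2}-1)` holds iff `k ≥ 1` and `d = 2 min{k, v-k}`;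
in that case the Johnson I bound simplifies to `(q^v-1)/(q^{min{k,v-k}}-1)`. -/
theorem stmt1 (q : ℕ) (hq : IsPrimePow q) (v k d : ℕ) (hkv : k < v)
    (hd2 : 2 ∣ d) (hd : 2 ≤ d) (hdmin : d ≤ 2 * min k (v - k)) :
    (((q : ℚ) ^ k - 1) ^ 2 > ((q : ℚ) ^ v - 1) * ((q : ℚ) ^ (k - d / 2) - 1) ↔
      1 ≤ k ∧ d = 2 * min k (v - k)) ∧
    (1 ≤ k → d = 2 * min k (v - k) →
      ((q : ℚ) ^ k - (q : ℚ) ^ (k - d / 2)) * ((q : ℚ) ^ v - 1) /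
          (((q : ℚ) ^ k - 1) ^ 2 - ((q : ℚ) ^ v - 1) * ((q : ℚ) ^ (k - d / 2) - 1)) =
        ((q : ℚ) ^ v - 1) / ((q : ℚ) ^ min k (v - k) - 1)) := by
  obtain ⟨e, rfl⟩ := hd2
  have he1 : 1 ≤ e := by omega
  have hek : e ≤ k := by omega
  obtain ⟨a, ha⟩ : ∃ a, k = a + e := ⟨k - e, by omega⟩
  subst ha
  obtain ⟨t, ht⟩ : ∃ t, v = a + e + e + t := ⟨v - (a + e + e), by omega⟩
  subst ht
  have hq2 : 2 ≤ q := hq.two_le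
  have hQ : (2:ℚ) ≤ (q:ℚ) := by exact_mod_cast hq2
  have hQ1 : (1:ℚ) ≤ (q:ℚ) := by linarith
  have hA : (q:ℚ)^a = 1 ∨ 2 ≤ (q:ℚ)^a := by
    rcases Nat.eq_zero_or_pos a with rfl | h
    · left; simp
    · right; calc (2:ℚ) ≤ (q:ℚ) := hQ
        _ ≤ (q:ℚ)^a := le_self_pow₀ hQ1 (by omega)
  have hT : (q:ℚ)^t = 1 ∨ 2 ≤ (q:ℚ)^t := by
    rcases Nat.eq_zero_or_pos t with rfl | h
    · left; simp
    · right; calc (2:ℚ) ≤ (q:ℚ) := hQ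
        _ ≤ (q:ℚ)^t := le_self_pow₀ hQ1 (by omega)
  have hE : (2:ℚ) ≤ (q:ℚ)^e := by
    calc (2:ℚ) ≤ (q:ℚ) := hQ
      _ ≤ (q:ℚ)^e := le_self_pow₀ hQ1 (by omega)
  have hA1 : (1:ℚ) ≤ (q:ℚ)^a := one_le_pow₀ hQ1
  have hT1 : (1:ℚ) ≤ (q:ℚ)^t := one_le_pow₀ hQ1
  have e1 : a + e - 2 * e / 2 = a := by omega
  have e2 : (q:ℚ)^(a+e) = (q:ℚ)^a * (q:ℚ)^e := by rw [pow_add]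
  have e3 : (q:ℚ)^(a+e+e+t) = (q:ℚ)^a * (q:ℚ)^e * (q:ℚ)^e * (q:ℚ)^t := by
    rw [pow_add, pow_add, pow_add]
  rw [e1, e2, e3]
  constructor
  · rw [aux1 ((q:ℚ)^a) ((q:ℚ)^e) ((q:ℚ)^t) hA hE hT]
    have hae : ((q:ℚ)^a = 1 ∨ (q:ℚ)^t = 1) ↔ (a = 0 ∨ t = 0) := by
      constructor
      · rintro (h | h)
        · left; by_contra hc
          have : (2:ℚ) ≤ (q:ℚ)^a := le_trans hQ (le_self_pow₀ hQ1 hc)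
          linarith
        · right; by_contra hc
          have : (2:ℚ) ≤ (q:ℚ)^t := le_trans hQ (le_self_pow₀ hQ1 hc)
          linarith
      · rintro (rfl | rfl)
        · left; simp
        · right; simp
    rw [hae]
    omega
  · intro hk hde'
    have hm : min (a + e) (a + e + e + t - (a + e)) = e := by omega
    rw [hm]
    have haot : ((q:ℚ)^a = 1 ∨ (q:ℚ)^t = 1) := by
      have : a = 0 ∨ t = 0 := by omega
      rcases this with rfl | rfl
      · left; simp
      · right; simp
    exact aux2 _ _ _ hA1 hE hT1 haot
end

section
/- Let q be a prime power, d an even positive integer, and k, v₀, s, l integers with 1 ≤ k ≤ v₀, 2s ≥ d, d ≤ 2k, and l ≥ 0. Then A_q(v₀ + ls, d; k) ≥ A_q(v₀, d; k) · M(q,k,s+k,d)^l + A_q(s − d/2 + k, d; k) · Σ_{j=0}^{l−1} M(q,k,s+k,d)^j. -/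
open Finset Filter
open Polynomial Module

/-- The subspace distance between two subspaces:
`d_S(U,W) = dim(U + W) - dim(U ∩ W)`. -/
noncomputable def subDist {F : Type*} [Field F] {v : ℕ} (U W : Submodule F (Fin v → F)) : ℕ :=
  Module.finrank F ↥(U ⊔ W) - Module.finrank F ↥(U ⊓ W)

/-- `Aq F v d k` is the maximum size of a set of `k`-dimensional subspaces of `F^v`
whose pairwise subspace distances are at least `d`. -/
noncomputable def Aq (F : Type*) [Field F] [Fintype F] (v d k : ℕ) : ℕ :=
  sSup {n | ∃ C : Finset (Submodule F (Fin v → F)),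
    (∀ U ∈ C, Module.finrank F ↥U = k) ∧
    (∀ U ∈ C, ∀ W ∈ C, U ≠ W → d ≤ subDist U W) ∧ C.card = n}

section AqBasic
variable (F : Type*) [Field F] [Fintype F] (v d k : ℕ)

instance submodFinite : Finite (Submodule F (Fin v → F)) :=
  Finite.of_injective _ SetLike.coe_injective

lemma aqSet_bdd : BddAbove {n | ∃ C : Finset (Submodule F (Fin v → F)),
    (∀ U ∈ C, Module.finrank F ↥U = k) ∧
    (∀ U ∈ C, ∀ W ∈ C, U ≠ W → d ≤ subDist U W) ∧ C.card = n} := by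
  classical
  have : Fintype (Submodule F (Fin v → F)) := Fintype.ofFinite _
  refine ⟨Fintype.card (Submodule F (Fin v → F)), ?_⟩
  rintro n ⟨C, -, -, rfl⟩
  exact Finset.card_le_univ C

variable {F v d k}

lemma card_le_Aq (C : Finset (Submodule F (Fin v → F)))
    (h1 : ∀ U ∈ C, Module.finrank F ↥U = k)
    (h2 : ∀ U ∈ C, ∀ W ∈ C, U ≠ W → d ≤ subDist U W) :
    C.card ≤ Aq F v d k :=
  le_csSup (aqSet_bdd F v d k) ⟨C, h1, h2, rfl⟩

lemma exists_optimal_code : ∃ C : Finset (Submodule F (Fin v → F)),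
    (∀ U ∈ C, Module.finrank F ↥U = k) ∧
    (∀ U ∈ C, ∀ W ∈ C, U ≠ W → d ≤ subDist U W) ∧ C.card = Aq F v d k := by
  have h : Aq F v d k ∈ {n | ∃ C : Finset (Submodule F (Fin v → F)),
      (∀ U ∈ C, Module.finrank F ↥U = k) ∧
      (∀ U ∈ C, ∀ W ∈ C, U ≠ W → d ≤ subDist U W) ∧ C.card = n} :=
    Nat.sSup_mem ⟨0, ⟨∅, by simp⟩⟩ (aqSet_bdd F v d k)
  exact h

omit [Fintype F] in
lemma subDist_eq (U W : Submodule F (Fin v → F)) (hU : Module.finrank F ↥U = k)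
    (hW : Module.finrank F ↥W = k) :
    subDist U W = 2 * k - 2 * Module.finrank F ↥(U ⊓ W) := by
  have h := Submodule.finrank_sup_add_finrank_inf_eq U W
  have h2 : Module.finrank F ↥(U ⊓ W) ≤ k := hU ▸ Submodule.finrank_mono inf_le_left
  rw [subDist]
  omega

end AqBasic


section Ext
variable (F : Type*) [Field F] [Fintype F] (m : ℕ)

/-- A field extension of `F` of degree `m` (for `m ≠ 0`): the splitting field of
`X ^ (|F| ^ m) - X`. -/
noncomputable def FExt : Type _ :=
  SplittingField (X ^ (Fintype.card F) ^ m - X : F[X])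

noncomputable instance : Field (FExt F m) :=
  inferInstanceAs (Field (SplittingField _))

noncomputable instance : Algebra F (FExt F m) :=
  inferInstanceAs (Algebra F (SplittingField (X ^ (Fintype.card F) ^ m - X : F[X])))

instance : IsSplittingField F (FExt F m) (X ^ (Fintype.card F) ^ m - X) :=
  IsSplittingField.splittingField _

instance : FiniteDimensional F (FExt F m) := by
  exact IsSplittingField.finiteDimensional (FExt F m) (X ^ (Fintype.card F) ^ m - X)

instance : Finite (FExt F m) := Module.finite_of_finite F

theorem FExt_finrank (hm : m ≠ 0) : Module.finrank F (FExt F m) = m := by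
  classical
  haveI : Fintype (FExt F m) := Fintype.ofFinite _
  set q := Fintype.card F with hq
  have hq1 : 1 < q := Fintype.one_lt_card
  obtain ⟨p, hpc⟩ := CharP.exists F
  haveI : CharP F p := hpc
  haveI hp : Fact p.Prime := ⟨(CharP.char_is_prime F p)⟩
  obtain ⟨e, -, hqe⟩ := FiniteField.card F p
  haveI : CharP (FExt F m) p := (Algebra.charP_iff F (FExt F m) p).mp ‹_›
  set g : F[X] := X ^ q ^ m - X with hg
  have hgne : g ≠ 0 := FiniteField.X_pow_card_pow_sub_X_ne_zero _ hm hq1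
  have hdvd : p ∣ q ^ m := by
    refine dvd_pow ?_ hm
    rw [hq, hqe]; exact dvd_pow_self p e.2.ne'
  have hsep : g.Separable := galois_poly_separable p (q ^ m) hdvd
  have key : Fintype.card (g.rootSet (FExt F m)) = g.natDegree :=
    card_rootSet_eq_natDegree hsep (SplittingField.splits g)
  have hdeg : g.natDegree = q ^ m :=
    FiniteField.X_pow_card_pow_sub_X_natDegree_eq _ hm hq1
  -- the root set is everything
  have huniv : g.rootSet (FExt F m) = Set.univ := by
    -- the set of roots is a subalgebra containing the adjoined roots
    obtain ⟨j, hj⟩ : ∃ j : ℕ, q ^ m = p ^ j := ⟨e * m, by rw [hq, hqe, ← pow_mul]⟩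
    have hmem : ∀ x : FExt F m, x ∈ g.rootSet (FExt F m) ↔ x ^ q ^ m = x := by
      intro x
      rw [mem_rootSet_of_ne hgne, hg, map_sub, map_pow, aeval_X, sub_eq_zero]
    let S : Subalgebra F (FExt F m) :=
      { carrier := {x | x ^ q ^ m = x}
        mul_mem' := by
          intro a b ha hb
          simp only [Set.mem_setOf_eq] at *
          rw [mul_pow, ha, hb]
        one_mem' := by simp
        add_mem' := by
          intro a b ha hb
          simp only [Set.mem_setOf_eq] at *
          rw [hj, add_pow_char_pow] at *
          rw [ha, hb]
        zero_mem' := by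
          simp only [Set.mem_setOf_eq]
          exact zero_pow (pow_ne_zero m (by omega))
        algebraMap_mem' := by
          intro r
          simp only [Set.mem_setOf_eq, ← map_pow]
          rw [hq, FiniteField.pow_card_pow] }
    have hT : (⊤ : Subalgebra F (FExt F m)) ≤ S := by
      rw [← IsSplittingField.adjoin_rootSet (FExt F m) g]
      refine Algebra.adjoin_le ?_
      intro x hx
      exact (hmem x).mp hx
    ext x
    simp only [Set.mem_univ, iff_true, hmem x]
    exact hT (Algebra.mem_top)
  have hcard : Fintype.card (FExt F m) = q ^ m := by
    rw [← hdeg, ← key]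
    symm
    exact Fintype.card_congr (Equiv.subtypeUnivEquiv (fun x => by rw [huniv]; trivial))
  have := card_eq_pow_finrank (K := F) (V := FExt F m)
  rw [hcard, ← hq] at this
  exact (Nat.pow_right_injective hq1 this.symm)

theorem FExt_card (hm : m ≠ 0) :
    Nat.card (FExt F m) = Fintype.card F ^ m := by
  classical
  haveI : Fintype (FExt F m) := Fintype.ofFinite _
  rw [Nat.card_eq_fintype_card, card_eq_pow_finrank (K := F), FExt_finrank F m hm]

end Ext


section LinPoly
variable (F : Type*) [Field F] [Fintype F]
variable (E : Type*) [Field E] [Algebra F E]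

lemma pow_q_add (x y : E) (n : ℕ) :
    (x + y) ^ (Fintype.card F) ^ n = x ^ (Fintype.card F) ^ n + y ^ (Fintype.card F) ^ n := by
  obtain ⟨p, hpc⟩ := CharP.exists F
  haveI : CharP F p := hpc
  haveI hp : Fact p.Prime := ⟨CharP.char_is_prime F p⟩
  obtain ⟨e, -, hqe⟩ := FiniteField.card F p
  haveI : CharP E p := (Algebra.charP_iff F E p).mp ‹_›
  rw [hqe, ← pow_mul, add_pow_char_pow]

lemma pow_q_smul (c : F) (x : E) (n : ℕ) :
    (c • x) ^ (Fintype.card F) ^ n = c • x ^ (Fintype.card F) ^ n := by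
  rw [Algebra.smul_def, mul_pow, ← map_pow, FiniteField.pow_card_pow, ← Algebra.smul_def]

variable {t : ℕ}

/-- The `F`-linear map `x ↦ ∑ i, a i * x ^ (q ^ i)` on `E`, where `q = |F|`. -/
noncomputable def linPoly (a : Fin t → E) : E →ₗ[F] E where
  toFun x := ∑ i, a i * x ^ (Fintype.card F) ^ (i : ℕ)
  map_add' x y := by
    rw [← Finset.sum_add_distrib]
    refine Finset.sum_congr rfl fun i _ => ?_
    rw [pow_q_add, mul_add]
  map_smul' c x := by
    simp only [RingHom.id_apply, Finset.smul_sum]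
    refine Finset.sum_congr rfl fun i _ => ?_
    rw [pow_q_smul, mul_smul_comm]

lemma linPoly_apply (a : Fin t → E) (x : E) :
    linPoly F E a x = ∑ i, a i * x ^ (Fintype.card F) ^ (i : ℕ) := rfl

lemma linPoly_sub (a b : Fin t → E) :
    linPoly F E a - linPoly F E b = linPoly F E (a - b) := by
  ext x
  simp only [LinearMap.sub_apply, linPoly_apply, Pi.sub_apply, sub_mul,
    Finset.sum_sub_distrib]

lemma nat_card_ker_linPoly_le [Finite E] (a : Fin t → E) (ha : a ≠ 0) :
    Nat.card (LinearMap.ker (linPoly F E a)) ≤ (Fintype.card F) ^ (t - 1) := by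
  classical
  haveI : Fintype E := Fintype.ofFinite E
  set q := Fintype.card F with hq
  have hq1 : 1 < q := Fintype.one_lt_card
  set P : E[X] := ∑ i : Fin t, C (a i) * X ^ (q ^ (i : ℕ)) with hP
  obtain ⟨i0, hi0⟩ : ∃ i, a i ≠ 0 := by
    by_contra h
    push_neg at h
    exact ha (funext fun i => h i)
  have hcoeff : P.coeff (q ^ (i0 : ℕ)) = a i0 := by
    rw [hP, finset_sum_coeff]
    rw [Finset.sum_eq_single i0]
    · simp [coeff_C_mul_X_pow]
    · intro j _ hj
      rw [coeff_C_mul_X_pow]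
      have : q ^ (j : ℕ) ≠ q ^ (i0 : ℕ) := fun h =>
        hj (Fin.ext (Nat.pow_right_injective hq1 h))
      simp [Ne.symm this]
    · simp
  have hPne : P ≠ 0 := fun h => hi0 (by rw [← hcoeff, h, coeff_zero])
  have hdeg : P.natDegree ≤ q ^ (t - 1) := by
    refine natDegree_sum_le_of_forall_le _ _ fun i _ => ?_
    refine le_trans (natDegree_C_mul_X_pow_le _ _) ?_
    exact Nat.pow_le_pow_right (le_of_lt hq1) (by omega)
  have hsub : (LinearMap.ker (linPoly F E a) : Set E) ⊆ ↑P.roots.toFinset := by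
    intro x hx
    simp only [SetLike.mem_coe, LinearMap.mem_ker] at hx
    simp only [Finset.coe_sort_coe, Multiset.mem_toFinset, Finset.mem_coe]
    rw [mem_roots hPne, IsRoot.def, hP, eval_finset_sum]
    simpa [linPoly_apply] using hx
  calc Nat.card (LinearMap.ker (linPoly F E a))
      = (LinearMap.ker (linPoly F E a) : Set E).ncard := (Nat.card_coe_set_eq _)
    _ ≤ (↑P.roots.toFinset : Set E).ncard := Set.ncard_le_ncard hsub (Set.toFinite _)
    _ = P.roots.toFinset.card := by rw [Set.ncard_coe_finset]
    _ ≤ P.roots.card := Multiset.toFinset_card_le _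
    _ ≤ P.natDegree := (card_roots' P)
    _ ≤ q ^ (t - 1) := hdeg

lemma finrank_ker_linPoly_le [Finite E] (a : Fin t → E) (ha : a ≠ 0) :
    finrank F (LinearMap.ker (linPoly F E a)) ≤ t - 1 := by
  classical
  haveI : Fintype E := Fintype.ofFinite E
  haveI : Fintype (LinearMap.ker (linPoly F E a)) := Fintype.ofFinite _
  have h1 : Nat.card (LinearMap.ker (linPoly F E a))
      = Fintype.card F ^ finrank F (LinearMap.ker (linPoly F E a)) := by
    rw [Nat.card_eq_fintype_card, card_eq_pow_finrank (K := F)]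
  have h2 := nat_card_ker_linPoly_le F E a ha
  rw [h1] at h2
  exact (Nat.pow_le_pow_iff_right Fintype.one_lt_card).mp h2

end LinPoly

section MRDPrimal
variable {F : Type*} [Field F] [Fintype F]

lemma exists_MRD_primal (n m δ : ℕ) (hδ1 : 1 ≤ δ) (hδn : δ ≤ n) (hnm : n ≤ m) :
    ∃ 𝓐 : Finset ((Fin n → F) →ₗ[F] (Fin m → F)),
      𝓐.card = (Fintype.card F) ^ (m * (n - δ + 1)) ∧
      ∀ A ∈ 𝓐, ∀ B ∈ 𝓐, A ≠ B →
        δ ≤ finrank F (LinearMap.range (A - B)) := by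
  classical
  have hm0 : m ≠ 0 := by omega
  set E := FExt F m with hE
  haveI : Fintype E := Fintype.ofFinite E
  set t := n - δ + 1 with ht
  set bE : Basis (Fin m) F E := finBasisOfFinrankEq F E (FExt_finrank F m hm0) with hbE
  set ι : (Fin n → F) →ₗ[F] E :=
    (Pi.basisFun F (Fin n)).constr F (fun i => bE (Fin.castLE hnm i)) with hι
  have hι_inj : Function.Injective ι := by
    rw [← LinearMap.ker_eq_bot]
    rw [Submodule.eq_bot_iff]
    intro x hx
    rw [LinearMap.mem_ker] at hx
    have hxa : ι x = ∑ i, x i • bE (Fin.castLE hnm i) := by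
      rw [hι, Basis.constr_apply_fintype]
      simp [Pi.basisFun_equivFun]
    rw [hxa] at hx
    have hli : LinearIndependent F (fun i : Fin n => bE (Fin.castLE hnm i)) :=
      bE.linearIndependent.comp _ (Fin.castLE_injective hnm)
    have := Fintype.linearIndependent_iff.mp hli x hx
    exact funext this
  have hrankι : finrank F (LinearMap.range ι) = n := by
    rw [LinearMap.finrank_range_of_inj hι_inj, Module.finrank_pi]
    simp
  set Amap : (Fin t → E) → ((Fin n → F) →ₗ[F] (Fin m → F)) :=
    fun a => (bE.equivFun : E →ₗ[F] (Fin m → F)) ∘ₗ (linPoly F E a) ∘ₗ ι with hAmap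
  have hdiff : ∀ a b : Fin t → E,
      Amap a - Amap b
        = (bE.equivFun : E →ₗ[F] (Fin m → F)) ∘ₗ (linPoly F E (a - b)) ∘ₗ ι := by
    intro a b
    ext x
    simp [hAmap, ← linPoly_sub F E a b, map_sub]
  -- rank bound for nonzero coefficient vectors
  have hrank : ∀ a : Fin t → E, a ≠ 0 →
      δ ≤ finrank F (LinearMap.range ((linPoly F E a) ∘ₗ ι)) := by
    intro a ha
    set h := (linPoly F E a) ∘ₗ ι with hh
    have hker : finrank F (LinearMap.ker h) ≤ n - δ := by
      have hmap : Submodule.map ι (LinearMap.ker h) ≤ LinearMap.ker (linPoly F E a) := by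
        rintro y ⟨x, hx, rfl⟩
        simp only [LinearMap.mem_ker, LinearMap.comp_apply] at hx ⊢
        exact hx
      have e1 : finrank F (LinearMap.ker h)
          = finrank F (Submodule.map ι (LinearMap.ker h)) :=
        (Submodule.equivMapOfInjective ι hι_inj _).finrank_eq
      calc finrank F (LinearMap.ker h)
          = finrank F (Submodule.map ι (LinearMap.ker h)) := e1
        _ ≤ finrank F (LinearMap.ker (linPoly F E a)) := Submodule.finrank_mono hmap
        _ ≤ t - 1 := finrank_ker_linPoly_le F E a ha
        _ = n - δ := by omega
    have hrn := LinearMap.finrank_range_add_finrank_ker h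
    rw [Module.finrank_pi, Fintype.card_fin] at hrn
    omega
  have hAinj : Function.Injective Amap := by
    intro a b hab
    by_contra hne
    have hab0 : a - b ≠ 0 := sub_ne_zero.mpr hne
    have h0 : (bE.equivFun : E →ₗ[F] (Fin m → F)) ∘ₗ (linPoly F E (a - b)) ∘ₗ ι = 0 := by
      rw [← hdiff, hab, sub_self]
    have h1 : LinearMap.range ι ≤ LinearMap.ker (linPoly F E (a - b)) := by
      rintro y ⟨x, rfl⟩
      rw [LinearMap.mem_ker]
      have := congrArg (fun f => f x) h0
      simp only [LinearMap.comp_apply, LinearMap.zero_apply, LinearMap.coe_coe] at this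
      exact bE.equivFun.map_eq_zero_iff.mp this
    have h2 : n ≤ t - 1 := by
      calc n = finrank F (LinearMap.range ι) := hrankι.symm
        _ ≤ finrank F (LinearMap.ker (linPoly F E (a - b))) := Submodule.finrank_mono h1
        _ ≤ t - 1 := finrank_ker_linPoly_le F E _ hab0
    omega
  refine ⟨Finset.image Amap Finset.univ, ?_, ?_⟩
  · rw [Finset.card_image_of_injective _ hAinj, Finset.card_univ, Fintype.card_fun]
    have hcE : Fintype.card E = Fintype.card F ^ m := by
      rw [← Nat.card_eq_fintype_card, FExt_card F m hm0]
    rw [hcE, Fintype.card_fin, ← pow_mul]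
  · intro A hA B hB hAB
    obtain ⟨a, -, rfl⟩ := Finset.mem_image.mp hA
    obtain ⟨b, -, rfl⟩ := Finset.mem_image.mp hB
    have hab0 : a - b ≠ 0 := sub_ne_zero.mpr (fun h => hAB (by rw [h]))
    rw [hdiff]
    have hronge : LinearMap.range ((bE.equivFun : E →ₗ[F] (Fin m → F)) ∘ₗ
        (linPoly F E (a - b)) ∘ₗ ι)
        = Submodule.map (bE.equivFun : E →ₗ[F] (Fin m → F))
            (LinearMap.range ((linPoly F E (a - b)) ∘ₗ ι)) := by
      rw [LinearMap.range_comp]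
    rw [hronge]
    have : finrank F (Submodule.map (bE.equivFun : E →ₗ[F] (Fin m → F))
        (LinearMap.range ((linPoly F E (a - b)) ∘ₗ ι)))
        = finrank F (LinearMap.range ((linPoly F E (a - b)) ∘ₗ ι)) :=
      bE.equivFun.finrank_map_eq _
    rw [this]
    exact hrank _ hab0
end MRDPrimal

section MRDFull
variable {F : Type*} [Field F] [Fintype F]

lemma exists_MRD (k s δ : ℕ) (hδ1 : 1 ≤ δ) (hδk : δ ≤ k) (hδs : δ ≤ s) :
    ∃ 𝓐 : Finset ((Fin k → F) →ₗ[F] (Fin s → F)),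
      𝓐.card = (Fintype.card F) ^ (max k s * (min k s - δ + 1)) ∧
      ∀ A ∈ 𝓐, ∀ B ∈ 𝓐, A ≠ B →
        finrank F (LinearMap.ker (A - B)) + δ ≤ k := by
  classical
  rcases le_or_gt k s with hks | hsk
  · obtain ⟨𝓐, hcard, hrank⟩ := exists_MRD_primal (F := F) k s δ hδ1 hδk hks
    refine ⟨𝓐, ?_, ?_⟩
    · rw [hcard, max_eq_right hks, min_eq_left hks]
    · intro A hA B hB hAB
      have h1 := hrank A hA B hB hAB
      have h2 := LinearMap.finrank_range_add_finrank_ker (A - B)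
      rw [Module.finrank_pi, Fintype.card_fin] at h2
      omega
  · obtain ⟨𝓑, hcard, hrank⟩ := exists_MRD_primal (F := F) s k δ hδ1 hδs hsk.le
    set ek : (Fin k → F) ≃ₗ[F] Module.Dual F (Fin k → F) :=
      (Pi.basisFun F (Fin k)).toDualEquiv with hek
    set es : (Fin s → F) ≃ₗ[F] Module.Dual F (Fin s → F) :=
      (Pi.basisFun F (Fin s)).toDualEquiv with hes
    set T : ((Fin s → F) →ₗ[F] (Fin k → F)) → ((Fin k → F) →ₗ[F] (Fin s → F)) :=
      fun A => (es.symm : Module.Dual F (Fin s → F) →ₗ[F] (Fin s → F)) ∘ₗ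
        A.dualMap ∘ₗ (ek : (Fin k → F) →ₗ[F] Module.Dual F (Fin k → F)) with hT
    have hTsub : ∀ A B, T A - T B
        = (es.symm : Module.Dual F (Fin s → F) →ₗ[F] (Fin s → F)) ∘ₗ
          (A - B).dualMap ∘ₗ (ek : (Fin k → F) →ₗ[F] Module.Dual F (Fin k → F)) := by
      intro A B
      have hdm : (A - B).dualMap = A.dualMap - B.dualMap := by
        ext φ y
        simp
      ext x
      simp [hT, hdm, map_sub]
    have hTrank : ∀ A B : (Fin s → F) →ₗ[F] (Fin k → F),
        finrank F (LinearMap.range (T A - T B)) = finrank F (LinearMap.range (A - B)) := by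
      intro A B
      rw [hTsub]
      have h1 : LinearMap.range ((A - B).dualMap ∘ₗ
          (ek : (Fin k → F) →ₗ[F] Module.Dual F (Fin k → F)))
          = LinearMap.range (A - B).dualMap :=
        LinearMap.range_comp_of_range_eq_top _ ek.range
      rw [LinearMap.range_comp, h1, LinearEquiv.finrank_map_eq,
        LinearMap.finrank_range_dualMap_eq_finrank_range]
    have hTinj : Function.Injective T := by
      intro A B hAB
      have h0 : finrank F (LinearMap.range (T A - T B)) = 0 := by
        rw [hAB, sub_self]
        simp
      rw [hTrank] at h0
      have := Submodule.finrank_eq_zero.mp h0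
      rw [LinearMap.range_eq_bot] at this
      exact sub_eq_zero.mp this
    refine ⟨Finset.image T 𝓑, ?_, ?_⟩
    · rw [Finset.card_image_of_injective _ hTinj, hcard,
        max_eq_left hsk.le, min_eq_right hsk.le]
    · intro A hA B hB hAB
      obtain ⟨a, ha, rfl⟩ := Finset.mem_image.mp hA
      obtain ⟨b, hb, rfl⟩ := Finset.mem_image.mp hB
      have hab : a ≠ b := fun h => hAB (by rw [h])
      have h1 := hrank a ha b hb hab
      have h2 := LinearMap.finrank_range_add_finrank_ker (T a - T b)
      rw [Module.finrank_pi, Fintype.card_fin, hTrank] at h2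
      omega

end MRDFull

section Linkage
variable (F : Type*) [Field F]

/-- Append as a linear equivalence `F^v × F^s ≃ F^(v+s)`. -/
noncomputable def appendLEquiv (v s : ℕ) :
    ((Fin v → F) × (Fin s → F)) ≃ₗ[F] (Fin (v + s) → F) where
  toFun p := Fin.append p.1 p.2
  map_add' p q := by
    funext i
    induction i using Fin.addCases with
    | left i => simp [Fin.append_left]
    | right i => simp [Fin.append_right]
  map_smul' c p := by
    funext i
    induction i using Fin.addCases with
    | left i => simp [Fin.append_left]
    | right i => simp [Fin.append_right]
  invFun z := (z ∘ Fin.castAdd s, z ∘ Fin.natAdd v)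
  left_inv p := by
    refine Prod.ext (funext fun i => ?_) (funext fun j => ?_)
    · simp [Fin.append_left]
    · simp [Fin.append_right]
  right_inv z := by
    funext i
    induction i using Fin.addCases with
    | left i => simp [Fin.append_left]
    | right i => simp [Fin.append_right]

variable [Fintype F]

/-- Transport a code through a linear equivalence to bound `Aq`. -/
lemma card_le_Aq_of_equiv {V : Type*} [AddCommGroup V] [Module F V]
    {w d k : ℕ} (e : V ≃ₗ[F] (Fin w → F)) (C : Finset (Submodule F V))
    (h1 : ∀ U ∈ C, Module.finrank F ↥U = k)
    (h2 : ∀ U ∈ C, ∀ W ∈ C, U ≠ W →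
      d ≤ Module.finrank F ↥(U ⊔ W) - Module.finrank F ↥(U ⊓ W)) :
    C.card ≤ Aq F w d k := by
  classical
  set f : Submodule F V → Submodule F (Fin w → F) :=
    fun U => Submodule.map (e : V →ₗ[F] (Fin w → F)) U with hf
  have hfinj : Function.Injective f :=
    Submodule.map_injective_of_injective e.injective
  have hcard : (C.image f).card = C.card := Finset.card_image_of_injective _ hfinj
  rw [← hcard]
  refine card_le_Aq _ ?_ ?_
  · intro U hU
    obtain ⟨U₀, hU₀, rfl⟩ := Finset.mem_image.mp hU
    rw [hf]
    rw [LinearEquiv.finrank_map_eq]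
    exact h1 U₀ hU₀
  · intro U hU W hW hUW
    obtain ⟨U₀, hU₀, rfl⟩ := Finset.mem_image.mp hU
    obtain ⟨W₀, hW₀, rfl⟩ := Finset.mem_image.mp hW
    have hne : U₀ ≠ W₀ := fun h => hUW (by rw [h])
    have := h2 U₀ hU₀ W₀ hW₀ hne
    simp only [subDist, hf]
    rw [← Submodule.map_sup, ← Submodule.map_inf (e : V →ₗ[F] (Fin w → F)) e.injective,
      LinearEquiv.finrank_map_eq, LinearEquiv.finrank_map_eq]
    exact this

/-- An embedding of `F^k` onto a `k`-dimensional subspace `U`. -/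
noncomputable def embk {v k : ℕ} (U : Submodule F (Fin v → F))
    (h : Module.finrank F ↥U = k) : (Fin k → F) →ₗ[F] (Fin v → F) :=
  U.subtype ∘ₗ ((finBasisOfFinrankEq F ↥U h).equivFun.symm :
    (Fin k → F) →ₗ[F] ↥U)

omit [Fintype F] in
lemma embk_inj {v k : ℕ} (U : Submodule F (Fin v → F)) (h : Module.finrank F ↥U = k) :
    Function.Injective (embk F U h) := by
  rw [embk, LinearMap.coe_comp]
  exact Function.Injective.comp U.injective_subtype
    (finBasisOfFinrankEq F ↥U h).equivFun.symm.injective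

omit [Fintype F] in
lemma range_embk {v k : ℕ} (U : Submodule F (Fin v → F)) (h : Module.finrank F ↥U = k) :
    LinearMap.range (embk F U h) = U := by
  rw [embk, LinearMap.range_comp, LinearEquiv.range, Submodule.map_top,
    Submodule.range_subtype]

end Linkage

section ProdRange
variable {F : Type*} [Field F] {k v s : ℕ}

lemma finrank_map_of_disjoint {V W : Type*} [AddCommGroup V] [Module F V]
    [AddCommGroup W] [Module F W] [FiniteDimensional F V]
    (f : V →ₗ[F] W) (p : Submodule F V) (h : Disjoint (LinearMap.ker f) p) :
    Module.finrank F ↥(Submodule.map f p) = Module.finrank F ↥p := by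
  have hker : LinearMap.ker (f.domRestrict p) = ⊥ := by
    rw [Submodule.eq_bot_iff]
    rintro ⟨x, hx⟩ hx0
    rw [LinearMap.mem_ker, LinearMap.domRestrict_apply] at hx0
    have : x ∈ LinearMap.ker f ⊓ p := ⟨hx0, hx⟩
    rw [h.eq_bot] at this
    exact Subtype.ext this
  have h1 := LinearMap.finrank_range_add_finrank_ker (f.domRestrict p)
  rw [hker, LinearMap.range_domRestrict] at h1
  simpa using h1

variable (f : (Fin k → F) →ₗ[F] (Fin v → F))
  (A A' : (Fin k → F) →ₗ[F] (Fin s → F))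

lemma prodRange_finrank (hf : Function.Injective f) :
    Module.finrank F ↥(LinearMap.range (f.prod A)) = k := by
  have hinj : Function.Injective (f.prod A) := by
    intro x y hxy
    exact hf (congrArg Prod.fst hxy)
  rw [LinearMap.finrank_range_of_inj hinj, Module.finrank_pi, Fintype.card_fin]

lemma prodRange_fst :
    Submodule.map (LinearMap.fst F (Fin v → F) (Fin s → F)) (LinearMap.range (f.prod A))
      = LinearMap.range f := by
  rw [← LinearMap.range_comp, LinearMap.fst_prod]

lemma prodRange_disjoint (hf : Function.Injective f) :
    Disjoint (LinearMap.ker (LinearMap.fst F (Fin v → F) (Fin s → F)))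
      (LinearMap.range (f.prod A)) := by
  rw [disjoint_iff, Submodule.eq_bot_iff]
  intro x hx
  obtain ⟨hx1, hx2⟩ := Submodule.mem_inf.mp hx
  obtain ⟨a, rfl⟩ := LinearMap.mem_range.mp hx2
  have : f a = 0 := hx1
  have ha : a = 0 := by
    apply hf
    rw [this, map_zero]
  simp [LinearMap.prod_apply, ha]

lemma prodRange_inf_le (hf : Function.Injective f) :
    LinearMap.range (f.prod A) ⊓ LinearMap.range (f.prod A')
      ≤ Submodule.map (f.prod A) (LinearMap.ker (A - A')) := by
  intro x hx
  obtain ⟨hxl, hxr⟩ := Submodule.mem_inf.mp hx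
  obtain ⟨a, rfl⟩ := LinearMap.mem_range.mp hxl
  obtain ⟨a', ha'⟩ := LinearMap.mem_range.mp hxr
  have h1 : f a' = f a := congrArg Prod.fst ha'
  have h2 : a' = a := hf h1
  subst h2
  have h3 : A' a' = A a' := congrArg Prod.snd ha'
  refine ⟨a', ?_, rfl⟩
  rw [SetLike.mem_coe, LinearMap.mem_ker, LinearMap.sub_apply, h3, sub_self]

end ProdRange

section PadB
variable {F : Type*} [Field F]

lemma finrank_ker_funLeft (v w : ℕ) (hw : w ≤ v) :
    Module.finrank F (LinearMap.ker
      (LinearMap.funLeft F F (Fin.castLE hw : Fin w → Fin v))) = v - w := by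
  set g := LinearMap.funLeft F F (Fin.castLE hw : Fin w → Fin v) with hg
  have hsurj : Function.Surjective g :=
    LinearMap.funLeft_surjective_of_injective F F _ (Fin.castLE_injective hw)
  have h1 := LinearMap.finrank_range_add_finrank_ker g
  rw [LinearMap.range_eq_top.mpr hsurj] at h1
  rw [Module.finrank_pi, Fintype.card_fin] at h1
  have h2 : Module.finrank F (⊤ : Submodule F (Fin w → F)) = w := by
    rw [finrank_top, Module.finrank_pi, Fintype.card_fin]
  omega

variable {v s δ k : ℕ}

/-- The embedding of `F^(s-δ+k)` into `F^v × F^s` used for the second part of the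
linkage construction: the `F^(k-δ)` part goes to the last `k-δ` coordinates of `F^v`. -/
noncomputable def padB (hδk : δ ≤ k) (hkv : k ≤ v) :
    (Fin (s - δ + k) → F) →ₗ[F] ((Fin v → F) × (Fin s → F)) where
  toFun x :=
    (fun i => if h : v - (k - δ) ≤ (i : ℕ) then
        x ⟨(i : ℕ) - (v - (k - δ)), by have := i.isLt; omega⟩ else 0,
     fun j => x ⟨(k - δ) + (j : ℕ), by have := j.isLt; omega⟩)
  map_add' x y := by
    refine Prod.ext (funext fun i => ?_) (funext fun j => ?_)
    · dsimp only
      simp only [Prod.fst_add, Pi.add_apply]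
      by_cases h : v - (k - δ) ≤ (i : ℕ)
      · rw [dif_pos h, dif_pos h, dif_pos h]
      · rw [dif_neg h, dif_neg h, dif_neg h, add_zero]
    · rfl
  map_smul' c x := by
    refine Prod.ext (funext fun i => ?_) (funext fun j => ?_)
    · dsimp only
      simp only [Prod.smul_fst, Pi.smul_apply]
      by_cases h : v - (k - δ) ≤ (i : ℕ)
      · rw [dif_pos h, dif_pos h]; rfl
      · rw [dif_neg h, dif_neg h, smul_zero]
    · rfl

lemma padB_inj (hδk : δ ≤ k) (hkv : k ≤ v) (hδs : δ ≤ s) :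
    Function.Injective (padB (F := F) (v := v) (s := s) hδk hkv) := by
  rw [← LinearMap.ker_eq_bot, Submodule.eq_bot_iff]
  intro x hx
  rw [LinearMap.mem_ker] at hx
  have h1 := congrArg Prod.fst hx
  have h2 := congrArg Prod.snd hx
  simp only [padB, LinearMap.coe_mk, AddHom.coe_mk] at h1 h2
  funext j
  rcases lt_or_ge (j : ℕ) (k - δ) with hj | hj
  · have hi : v - (k - δ) + (j : ℕ) < v := by have := j.isLt; omega
    have := congrFun h1 ⟨v - (k - δ) + (j : ℕ), hi⟩
    simp only [Pi.zero_apply] at this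
    rw [dif_pos (Nat.le_add_right _ _)] at this
    simpa using this
  · have hjs : (j : ℕ) - (k - δ) < s := by have := j.isLt; omega
    have := congrFun h2 ⟨(j : ℕ) - (k - δ), hjs⟩
    simp only [Pi.zero_apply] at this
    have hj2 : (⟨(k - δ) + ((j : ℕ) - (k - δ)), by have := j.isLt; omega⟩ :
        Fin (s - δ + k)) = j := Fin.ext (by simp; omega)
    rw [hj2] at this
    exact this

lemma padB_fst_mem (hδk : δ ≤ k) (hkv : k ≤ v) (x : Fin (s - δ + k) → F) :
    (padB (F := F) (v := v) (s := s) hδk hkv x).1 ∈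
      LinearMap.ker (LinearMap.funLeft F F
        (Fin.castLE (show v - (k - δ) ≤ v by omega) : Fin (v - (k - δ)) → Fin v)) := by
  rw [LinearMap.mem_ker]
  funext i
  simp only [LinearMap.funLeft_apply, Pi.zero_apply]
  rw [padB]
  simp only [LinearMap.coe_mk, AddHom.coe_mk]
  rw [dif_neg (by have := i.isLt; simp [Fin.castLE]; omega)]

end PadB

section Step
variable {F : Type*} [Field F] [Fintype F]

omit [Fintype F] in
lemma dist_ge_of_inf_le {V : Type*} [AddCommGroup V] [Module F V] [FiniteDimensional F V]
    {k d δ : ℕ} (X Y : Submodule F V) (hX : Module.finrank F ↥X = k)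
    (hY : Module.finrank F ↥Y = k) (hinf : Module.finrank F ↥(X ⊓ Y) + δ ≤ k)
    (hd : d = 2 * δ) :
    d ≤ Module.finrank F ↥(X ⊔ Y) - Module.finrank F ↥(X ⊓ Y) := by
  have := Submodule.finrank_sup_add_finrank_inf_eq X Y
  omega

lemma linkage_step (k d δ v s : ℕ) (hd : d = 2 * δ)
    (hδ1 : 1 ≤ δ) (hδk : δ ≤ k) (hδs : δ ≤ s) (hkv : k ≤ v) :
    Aq F v d k * (Fintype.card F) ^ (max k s * (min k s - δ + 1)) + Aq F (s - δ + k) d k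
      ≤ Aq F (v + s) d k := by
  classical
  obtain ⟨C₁, hC₁dim, hC₁dist, hC₁card⟩ :=
    exists_optimal_code (F := F) (v := v) (d := d) (k := k)
  obtain ⟨C₂, hC₂dim, hC₂dist, hC₂card⟩ :=
    exists_optimal_code (F := F) (v := s - δ + k) (d := d) (k := k)
  obtain ⟨𝓐, h𝓐card, h𝓐⟩ := exists_MRD (F := F) k s δ hδ1 hδk hδs
  set gA : {x // x ∈ C₁} × ((Fin k → F) →ₗ[F] (Fin s → F)) →
      Submodule F ((Fin v → F) × (Fin s → F)) :=
    fun p => LinearMap.range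
      ((embk F (p.1 : Submodule F (Fin v → F)) (hC₁dim p.1 p.1.2)).prod p.2) with hgA
  set gB : Submodule F (Fin (s - δ + k) → F) → Submodule F ((Fin v → F) × (Fin s → F)) :=
    fun W => Submodule.map (padB (F := F) (v := v) (s := s) hδk hkv) W with hgB
  -- dimensions
  have hgA_dim : ∀ p, Module.finrank F ↥(gA p) = k := fun p =>
    prodRange_finrank _ _ (embk_inj F _ _)
  have hgB_dim : ∀ W ∈ C₂, Module.finrank F ↥(gB W) = k := by
    intro W hW
    rw [hgB]
    rw [← (Submodule.equivMapOfInjective _ (padB_inj hδk hkv hδs) W).finrank_eq]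
    exact hC₂dim W hW
  -- first projections
  have hgA_fst : ∀ p, Submodule.map (LinearMap.fst F (Fin v → F) (Fin s → F)) (gA p)
      = (p.1 : Submodule F (Fin v → F)) := by
    intro p
    rw [hgA]
    rw [prodRange_fst, range_embk]
  have hgA_disj : ∀ p, Disjoint (LinearMap.ker (LinearMap.fst F (Fin v → F) (Fin s → F)))
      (gA p) := fun p => prodRange_disjoint _ _ (embk_inj F _ _)
  -- inf bound within part A
  have hInfA : ∀ p p', p.2 ∈ 𝓐 → p'.2 ∈ 𝓐 → p ≠ p' →
      Module.finrank F ↥(gA p ⊓ gA p') + δ ≤ k := by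
    rintro ⟨⟨U, hU⟩, A⟩ ⟨⟨U', hU'⟩, A'⟩ hA𝓐 hA'𝓐 hne
    by_cases hUU : U = U'
    · subst hUU
      have hAA : A ≠ A' := by
        intro h
        exact hne (by rw [h])
      have hle := prodRange_inf_le (embk F U (hC₁dim U hU)) A A' (embk_inj F _ _)
      have h1 : Module.finrank F ↥(gA (⟨U, hU⟩, A) ⊓ gA (⟨U, hU'⟩, A'))
          ≤ Module.finrank F ↥(LinearMap.ker (A - A')) :=
        le_trans (Submodule.finrank_mono hle) (Submodule.finrank_map_le _ _)
      have h2 := h𝓐 A hA𝓐 A' hA'𝓐 hAA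
      omega
    · -- different first subspaces
      set X := gA (⟨U, hU⟩, A) ⊓ gA (⟨U', hU'⟩, A') with hX
      have hdisj : Disjoint (LinearMap.ker (LinearMap.fst F (Fin v → F) (Fin s → F))) X :=
        Disjoint.mono_right inf_le_left (hgA_disj (⟨U, hU⟩, A))
      have h1 : Module.finrank F ↥X
          = Module.finrank F ↥(Submodule.map
            (LinearMap.fst F (Fin v → F) (Fin s → F)) X) :=
        (finrank_map_of_disjoint _ _ hdisj).symm
      have h2 : Submodule.map (LinearMap.fst F (Fin v → F) (Fin s → F)) X ≤ U ⊓ U' := by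
        refine le_trans (Submodule.map_inf_le _) ?_
        rw [hgA_fst (⟨U, hU⟩, A), hgA_fst (⟨U', hU'⟩, A')]
      have h3 : Module.finrank F ↥(U ⊓ U') + δ ≤ k := by
        have hdist := hC₁dist U hU U' hU' hUU
        have heq := subDist_eq U U' (hC₁dim U hU) (hC₁dim U' hU')
        have hmono : Module.finrank F ↥(U ⊓ U') ≤ k := by
          rw [← hC₁dim U hU]
          exact Submodule.finrank_mono inf_le_left
        omega
      have h4 := Submodule.finrank_mono h2
      omega
  -- inf bound between part A and part B
  have hvd : v - (k - δ) ≤ v := by omega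
  have hInfAB : ∀ p, ∀ W, Module.finrank F ↥(gA p ⊓ gB W) + δ ≤ k := by
    intro p W
    set X := gA p ⊓ gB W with hX
    have hdisj : Disjoint (LinearMap.ker (LinearMap.fst F (Fin v → F) (Fin s → F))) X :=
      Disjoint.mono_right inf_le_left (hgA_disj p)
    have h1 : Module.finrank F ↥X
        = Module.finrank F ↥(Submodule.map
          (LinearMap.fst F (Fin v → F) (Fin s → F)) X) :=
      (finrank_map_of_disjoint _ _ hdisj).symm
    have h2 : Submodule.map (LinearMap.fst F (Fin v → F) (Fin s → F)) X
        ≤ LinearMap.ker (LinearMap.funLeft F F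
          (Fin.castLE hvd : Fin (v - (k - δ)) → Fin v)) := by
      rintro y ⟨x, hx, rfl⟩
      obtain ⟨-, hxB⟩ := Submodule.mem_inf.mp hx
      obtain ⟨w, -, rfl⟩ := hxB
      exact padB_fst_mem hδk hkv w
    have h3 := Submodule.finrank_mono h2
    rw [finrank_ker_funLeft (F := F) v (v - (k - δ)) hvd] at h3
    omega
  -- the combined code
  set partA : Finset (Submodule F ((Fin v → F) × (Fin s → F))) :=
    (C₁.attach ×ˢ 𝓐).image gA with hpartA
  set partB : Finset (Submodule F ((Fin v → F) × (Fin s → F))) :=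
    C₂.image gB with hpartB
  have hABdisj : Disjoint partA partB := by
    rw [Finset.disjoint_left]
    intro X hXA hXB
    obtain ⟨p, -, rfl⟩ := Finset.mem_image.mp hXA
    obtain ⟨W, hW, hXB'⟩ := Finset.mem_image.mp hXB
    have h1 := hInfAB p W
    rw [hXB', inf_idem] at h1
    have h2 := hgA_dim p
    omega
  have hgAinj : Set.InjOn gA ↑(C₁.attach ×ˢ 𝓐) := by
    intro p hp p' hp' hEq
    by_contra hne
    have h1 := hInfA p p' (Finset.mem_product.mp (Finset.mem_coe.mp hp)).2
      (Finset.mem_product.mp (Finset.mem_coe.mp hp')).2 hne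
    rw [hEq, inf_idem] at h1
    have h2 := hgA_dim p'
    omega
  have hgBinj : Set.InjOn gB ↑C₂ := fun W _ W' _ h =>
    Submodule.map_injective_of_injective (padB_inj hδk hkv hδs) h
  have hcardA : partA.card = Aq F v d k * (Fintype.card F) ^ (max k s * (min k s - δ + 1)) := by
    rw [hpartA, Finset.card_image_of_injOn hgAinj, Finset.card_product,
      Finset.card_attach, hC₁card, h𝓐card]
  have hcardB : partB.card = Aq F (s - δ + k) d k := by
    rw [hpartB, Finset.card_image_of_injOn hgBinj, hC₂card]
  have hfrB : ∀ W₀ : Submodule F (Fin (s - δ + k) → F),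
      Module.finrank F ↥(Submodule.map (padB (F := F) (v := v) (s := s) hδk hkv) W₀)
        = Module.finrank F ↥W₀ := fun W₀ =>
    ((Submodule.equivMapOfInjective _ (padB_inj hδk hkv hδs) W₀).finrank_eq).symm
  have hmain : (partA ∪ partB).card ≤ Aq F (v + s) d k := by
    refine card_le_Aq_of_equiv F (appendLEquiv F v s) (partA ∪ partB) ?_ ?_
    · intro X hX
      rcases Finset.mem_union.mp hX with hX | hX
      · obtain ⟨p, -, rfl⟩ := Finset.mem_image.mp hX
        exact hgA_dim p
      · obtain ⟨W, hW, rfl⟩ := Finset.mem_image.mp hX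
        exact hgB_dim W hW
    · intro X hX Y hY hne
      rcases Finset.mem_union.mp hX with hX | hX <;>
        rcases Finset.mem_union.mp hY with hY | hY
      · obtain ⟨p, hp, rfl⟩ := Finset.mem_image.mp hX
        obtain ⟨p', hp', rfl⟩ := Finset.mem_image.mp hY
        have hpp : p ≠ p' := fun h => hne (by rw [h])
        exact dist_ge_of_inf_le _ _ (hgA_dim p) (hgA_dim p')
          (hInfA p p' (Finset.mem_product.mp hp).2 (Finset.mem_product.mp hp').2 hpp) hd
      · obtain ⟨p, -, rfl⟩ := Finset.mem_image.mp hX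
        obtain ⟨W, hW, rfl⟩ := Finset.mem_image.mp hY
        exact dist_ge_of_inf_le _ _ (hgA_dim p) (hgB_dim W hW) (hInfAB p W) hd
      · obtain ⟨W, hW, rfl⟩ := Finset.mem_image.mp hX
        obtain ⟨p, -, rfl⟩ := Finset.mem_image.mp hY
        have h1 := hInfAB p W
        rw [inf_comm] at h1
        exact dist_ge_of_inf_le _ _ (hgB_dim W hW) (hgA_dim p) h1 hd
      · obtain ⟨W, hW, rfl⟩ := Finset.mem_image.mp hX
        obtain ⟨W', hW', rfl⟩ := Finset.mem_image.mp hY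
        have hWW : W ≠ W' := fun h => hne (by rw [h])
        have hdist := hC₂dist W hW W' hW' hWW
        rw [subDist] at hdist
        rw [hgB]
        simp only
        rw [← Submodule.map_sup, ← Submodule.map_inf _ (padB_inj hδk hkv hδs),
          hfrB, hfrB]
        exact hdist
  calc Aq F v d k * (Fintype.card F) ^ (max k s * (min k s - δ + 1)) + Aq F (s - δ + k) d k
      = partA.card + partB.card := by rw [hcardA, hcardB]
    _ = (partA ∪ partB).card := (Finset.card_union_of_disjoint hABdisj).symm
    _ ≤ Aq F (v + s) d k := hmain

end Step

/-- `M q k v d` is the size of a lifted MRD code in `F_q^v` with codeword dimension `k`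
and (even) subspace distance `d`. -/
def M (q k v d : ℕ) : ℕ :=
  if d ≤ 2 * min k (v - k) then q ^ (max k (v - k) * (min k (v - k) - d / 2 + 1)) else 1

/-- Proposition (first arithmetic-progression bound): for `1 ≤ k ≤ v₀`, `2s ≥ d`, `d ≤ 2k`,
and `l ≥ 0`,
`A_q(v₀+ls,d;k) ≥ A_q(v₀,d;k) · M(q,k,s+k,d)^l + A_q(s-d/2+k,d;k) · ∑_{j=0}^{l-1} M(q,k,s+k,d)^j`. -/
theorem stmt9 (q : ℕ) (F : Type) [Field F] [Fintype F] (hF : Fintype.card F = q)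
    (k d v₀ s l : ℕ) (hd0 : 0 < d) (hd2 : 2 ∣ d)
    (hk : 1 ≤ k) (hkv : k ≤ v₀) (hs : d ≤ 2 * s) (hdk : d ≤ 2 * k) :
    Aq F v₀ d k * (M q k (s + k) d) ^ l +
        Aq F (s - d / 2 + k) d k * ∑ j ∈ Finset.range l, (M q k (s + k) d) ^ j ≤
      Aq F (v₀ + l * s) d k := by
  classical
  obtain ⟨δ, rfl⟩ := hd2
  have hδ1 : 1 ≤ δ := by omega
  have hδk : δ ≤ k := by omega
  have hδs : δ ≤ s := by omega
  have hdiv : 2 * δ / 2 = δ := by omega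
  set Mq := (Fintype.card F) ^ (max k s * (min k s - δ + 1)) with hMq
  have hM : M q k (s + k) (2 * δ) = Mq := by
    rw [M, Nat.add_sub_cancel]
    have hmin : δ ≤ min k s := le_min hδk hδs
    rw [if_pos (by omega), hdiv, ← hF, hMq]
  have main : ∀ l : ℕ,
      Aq F v₀ (2 * δ) k * Mq ^ l +
        Aq F (s - δ + k) (2 * δ) k * ∑ j ∈ Finset.range l, Mq ^ j ≤
      Aq F (v₀ + l * s) (2 * δ) k := by
    intro l
    induction l with
    | zero => simp
    | succ l ih =>
      have hstep := linkage_step (F := F) k (2 * δ) δ (v₀ + l * s) s rfl hδ1 hδk hδs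
        (le_trans hkv (Nat.le_add_right _ _))
      rw [← hMq] at hstep
      calc Aq F v₀ (2 * δ) k * Mq ^ (l + 1) +
            Aq F (s - δ + k) (2 * δ) k * ∑ j ∈ Finset.range (l + 1), Mq ^ j
          = (Aq F v₀ (2 * δ) k * Mq ^ l +
              Aq F (s - δ + k) (2 * δ) k * ∑ j ∈ Finset.range l, Mq ^ j) * Mq
            + Aq F (s - δ + k) (2 * δ) k := by
            rw [geom_sum_succ]
            ring
        _ ≤ Aq F (v₀ + l * s) (2 * δ) k * Mq + Aq F (s - δ + k) (2 * δ) k := by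
            exact Nat.add_le_add_right (Nat.mul_le_mul_right _ ih) _
        _ ≤ Aq F (v₀ + l * s + s) (2 * δ) k := hstep
        _ = Aq F (v₀ + (l + 1) * s) (2 * δ) k := by
            rw [show v₀ + l * s + s = v₀ + (l + 1) * s by ring]
  rw [hM, hdiv]
  exact main l
end

section
/- Let q be a prime power and let k, d, v₁, v₂ be integers with 1 ≤ d ≤ k ≤ min{v₁, v₂}. Then A_q(v₁ + v₂ + k, 2d; k) ≥ q^{(v₁+v₂)(k−d+1)} + A_q(v₁, 2d; k) + A_q(v₂, 2d; k). -/
open Finset Filter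

namespace Stmt12Aux

open Polynomial Module LinearMap

set_option linter.unusedSectionVars false

/-! ### Generic subspace-distance lemmas -/

section Dist

variable {F : Type} [Field F] {M N : Type*} [AddCommGroup M] [Module F M]
  [AddCommGroup N] [Module F N]

/-- General subspace distance in any module. -/
noncomputable def gDist (U W : Submodule F M) : ℕ :=
  Module.finrank F ↥(U ⊔ W) - Module.finrank F ↥(U ⊓ W)

lemma finrank_map_of_injective (f : M →ₗ[F] N) (hf : Function.Injective f)
    (S : Submodule F M) : finrank F ↥(S.map f) = finrank F ↥S :=
  (LinearEquiv.finrank_eq (Submodule.equivMapOfInjective f hf S)).symm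

lemma gDist_map (f : M →ₗ[F] N) (hf : Function.Injective f) (S T : Submodule F M) :
    gDist (S.map f) (T.map f) = gDist S T := by
  rw [gDist, gDist, ← Submodule.map_sup, ← Submodule.map_inf f hf,
    finrank_map_of_injective f hf, finrank_map_of_injective f hf]

lemma gDist_comm (U W : Submodule F M) : gDist U W = gDist W U := by
  rw [gDist, gDist, sup_comm, inf_comm]

lemma gDist_ge [FiniteDimensional F M] {U W : Submodule F M} {k d : ℕ}
    (hU : finrank F ↥U = k) (hW : finrank F ↥W = k)
    (hi : finrank F ↥(U ⊓ W) ≤ k - d) (hdk : d ≤ k) :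
    2 * d ≤ gDist U W := by
  have hsum := Submodule.finrank_sup_add_finrank_inf_eq U W
  rw [hU, hW] at hsum
  rw [gDist]
  omega

lemma ne_of_inf_bot {U W : Submodule F M} {k : ℕ}
    (hU : finrank F ↥U = k) (h : U ⊓ W = ⊥) (hk : 1 ≤ k) : U ≠ W := by
  rintro rfl
  rw [inf_idem] at h
  rw [h, finrank_bot] at hU
  omega

lemma prod_inj (f : M →ₗ[F] N) : Function.Injective (LinearMap.id.prod f) := by
  intro x y h
  simpa using congrArg Prod.fst h

lemma finrank_graph [FiniteDimensional F M] (f : M →ₗ[F] N) :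
    finrank F ↥f.graph = finrank F M := by
  rw [graph_eq_range_prod, ← Submodule.map_top]
  rw [(LinearEquiv.finrank_eq (Submodule.equivMapOfInjective _ (prod_inj f) ⊤)).symm]
  exact finrank_top F M

lemma graph_inf (f g : M →ₗ[F] N) :
    f.graph ⊓ g.graph = (ker (f - g)).map (LinearMap.id.prod f) := by
  ext ⟨x, y⟩
  simp only [Submodule.mem_inf, mem_graph_iff, Submodule.mem_map, mem_ker]
  constructor
  · rintro ⟨h1, h2⟩
    exact ⟨x, by simp [sub_eq_zero, ← h1, ← h2], by simp [← h1]⟩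
  · rintro ⟨z, hz, hz2⟩
    have h1 : z = x := congrArg Prod.fst hz2
    have h2 : f z = y := congrArg Prod.snd hz2
    subst h1
    have hz' : f z = g z := by
      have hz0 : (f - g) z = 0 := hz
      rwa [LinearMap.sub_apply, sub_eq_zero] at hz0
    exact ⟨h2.symm, h2.symm.trans hz'⟩

lemma finrank_graph_inf (f g : M →ₗ[F] N) :
    finrank F ↥(f.graph ⊓ g.graph) = finrank F ↥(ker (f - g)) := by
  rw [graph_inf]
  exact (LinearEquiv.finrank_eq (Submodule.equivMapOfInjective _ (prod_inj f) _)).symm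

lemma graph_injective : Function.Injective (LinearMap.graph (M := M) (M₂ := N) (R := F)) := by
  intro f g h
  ext x
  have : (x, f x) ∈ g.graph := h ▸ (by simp : (x, f x) ∈ f.graph)
  simpa using ((mem_graph_iff g _).mp this)

end Dist

/-! ### Basic `Aq` lemmas -/

section AqLemmas

variable {F : Type} [Field F] [Fintype F]

lemma subDist_eq_gDist {v : ℕ} (U W : Submodule F (Fin v → F)) : subDist U W = gDist U W := rfl

instance submodFinite {v : ℕ} : Finite (Submodule F (Fin v → F)) :=
  Finite.of_injective (fun S => (S : Set (Fin v → F))) fun _ _ h => SetLike.coe_injective h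

lemma aq_bddAbove (v d k : ℕ) : BddAbove {n | ∃ C : Finset (Submodule F (Fin v → F)),
    (∀ U ∈ C, Module.finrank F ↥U = k) ∧
    (∀ U ∈ C, ∀ W ∈ C, U ≠ W → d ≤ subDist U W) ∧ C.card = n} := by
  haveI : Fintype (Submodule F (Fin v → F)) := Fintype.ofFinite _
  refine ⟨Fintype.card (Submodule F (Fin v → F)), ?_⟩
  rintro n ⟨C, -, -, rfl⟩
  exact Finset.card_le_univ C

lemma aq_attained (v d k : ℕ) : ∃ C : Finset (Submodule F (Fin v → F)),
    (∀ U ∈ C, Module.finrank F ↥U = k) ∧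
    (∀ U ∈ C, ∀ W ∈ C, U ≠ W → d ≤ subDist U W) ∧ C.card = Aq F v d k := by
  have h := Nat.sSup_mem (s := {n | ∃ C : Finset (Submodule F (Fin v → F)),
    (∀ U ∈ C, Module.finrank F ↥U = k) ∧
    (∀ U ∈ C, ∀ W ∈ C, U ≠ W → d ≤ subDist U W) ∧ C.card = n})
    ⟨0, ∅, by simp⟩ (aq_bddAbove v d k)
  exact h

lemma le_aq {v d k : ℕ} (C : Finset (Submodule F (Fin v → F)))
    (h1 : ∀ U ∈ C, Module.finrank F ↥U = k)
    (h2 : ∀ U ∈ C, ∀ W ∈ C, U ≠ W → d ≤ subDist U W) :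
    C.card ≤ Aq F v d k :=
  le_csSup (aq_bddAbove v d k) ⟨C, h1, h2, rfl⟩

/-- Transfer a code from an abstract ambient space to `F^v` via a linear equivalence. -/
lemma le_aq_of_equiv {v d k : ℕ} {M : Type} [AddCommGroup M] [Module F M]
    (e : M ≃ₗ[F] (Fin v → F)) (C : Finset (Submodule F M))
    (h1 : ∀ U ∈ C, finrank F ↥U = k)
    (h2 : ∀ U ∈ C, ∀ W ∈ C, U ≠ W → d ≤ gDist U W) :
    C.card ≤ Aq F v d k := by
  classical
  have hinj : Function.Injective (Submodule.map (e : M →ₗ[F] (Fin v → F))) :=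
    Submodule.map_injective_of_injective e.injective
  have hcard : (C.image (Submodule.map (e : M →ₗ[F] (Fin v → F)))).card = C.card :=
    Finset.card_image_of_injective _ hinj
  rw [← hcard]
  refine le_aq _ ?_ ?_
  · rintro U hU
    obtain ⟨S, hS, rfl⟩ := Finset.mem_image.mp hU
    rw [finrank_map_of_injective _ e.injective]
    exact h1 S hS
  · rintro U hU W hW hne
    obtain ⟨S, hS, rfl⟩ := Finset.mem_image.mp hU
    obtain ⟨T, hT, rfl⟩ := Finset.mem_image.mp hW
    have hST : S ≠ T := fun h => hne (by rw [h])
    rw [subDist_eq_gDist, gDist_map _ e.injective]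
    exact h2 S hS T hT hST

end AqLemmas


/-! ### Degree-`m` extensions of a finite field -/

section Ext

variable (F : Type) [Field F] [Fintype F] (m : ℕ) (K : Type) [Field K] [Algebra F K]
  [IsSplittingField F K (X ^ Fintype.card F ^ m - X)]

theorem pow_card_pow_eq (hm : m ≠ 0) (x : K) : x ^ Fintype.card F ^ m = x := by
  haveI : Fact (ringChar F).Prime := ⟨CharP.char_is_prime F _⟩
  haveI : CharP K (ringChar F) :=
    charP_of_injective_algebraMap (algebraMap F K).injective _
  obtain ⟨e, hpe, hqe⟩ := FiniteField.card F (ringChar F)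
  have hq1 : 1 < Fintype.card F := Fintype.one_lt_card
  have aux : (X ^ Fintype.card F ^ m - X : F[X]) ≠ 0 :=
    FiniteField.X_pow_card_pow_sub_X_ne_zero _ hm hq1
  have hqm : Fintype.card F ^ m = ringChar F ^ ((e : ℕ) * m) := by rw [hqe, ← pow_mul]
  have hx : x ∈ Algebra.adjoin F ((X ^ Fintype.card F ^ m - X : F[X]).rootSet K) := by
    rw [IsSplittingField.adjoin_rootSet]
    trivial
  rw [Algebra.mem_adjoin_iff] at hx
  rw [hqm]
  refine Subring.closure_induction ?_ ?_ ?_ ?_ ?_ ?_ hx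
  · rintro y (⟨r, rfl⟩ | hy)
    · rw [← map_pow, ← hqm, FiniteField.pow_card_pow]
    · rw [mem_rootSet_of_ne aux] at hy
      simp only [map_sub, map_pow, aeval_X, sub_eq_zero] at hy
      rw [← hqm]
      exact hy
  · exact zero_pow (pow_ne_zero _ (Nat.Prime.ne_zero hpe))
  · exact one_pow _
  · intro a b _ _ ha hb
    rw [add_pow_char_pow, ha, hb]
  · intro a _ ha
    rw [neg_pow, neg_one_pow_char_pow, ha, neg_one_mul]
  · intro a b _ _ ha hb
    rw [mul_pow, ha, hb]

theorem finrank_Kext (hm : m ≠ 0) : finrank F K = m := by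
  haveI : FiniteDimensional F K :=
    IsSplittingField.finiteDimensional K (X ^ Fintype.card F ^ m - X : F[X])
  haveI : Finite K := Module.finite_of_finite F
  haveI : Fintype K := Fintype.ofFinite _
  haveI : Fact (ringChar F).Prime := ⟨CharP.char_is_prime F _⟩
  obtain ⟨e, hpe, hqe⟩ := FiniteField.card F (ringChar F)
  have hq1 : 1 < Fintype.card F := Fintype.one_lt_card
  have aux : (X ^ Fintype.card F ^ m - X : F[X]) ≠ 0 :=
    FiniteField.X_pow_card_pow_sub_X_ne_zero _ hm hq1
  have hsep : ((X ^ Fintype.card F ^ m - X : F[X])).Separable := by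
    have hd : ringChar F ∣ Fintype.card F ^ m := by
      refine dvd_pow ?_ hm
      rw [hqe]
      exact dvd_pow_self _ e.pos.ne'
    exact galois_poly_separable (ringChar F) (Fintype.card F ^ m) hd
  have key : Fintype.card ((X ^ Fintype.card F ^ m - X : F[X]).rootSet K) =
      (X ^ Fintype.card F ^ m - X : F[X]).natDegree :=
    card_rootSet_eq_natDegree hsep (IsSplittingField.splits K _)
  have hdeg : (X ^ Fintype.card F ^ m - X : F[X]).natDegree = Fintype.card F ^ m :=
    FiniteField.X_pow_card_pow_sub_X_natDegree_eq _ hm hq1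
  have huniv : ((X ^ Fintype.card F ^ m - X : F[X]).rootSet K) = Set.univ := by
    rw [Set.eq_univ_iff_forall]
    intro x
    rw [mem_rootSet_of_ne aux]
    simp only [map_sub, map_pow, aeval_X, sub_eq_zero]
    exact pow_card_pow_eq F m K hm x
  have hcard : Fintype.card K = Fintype.card F ^ m := by
    rw [← hdeg, ← key]
    exact Fintype.card_congr ((Equiv.Set.univ K).symm.trans (Equiv.setCongr huniv.symm))
  have hfin := card_eq_pow_finrank (K := F) (V := K)
  exact Nat.pow_right_injective hq1 (hfin.symm.trans hcard)


end Ext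

/-! ### Linearized polynomials -/

section Lin

variable (F : Type) [Field F] [Fintype F] (K : Type) [Field K] [Algebra F K]

/-- `x ↦ x ^ q ^ i` as an `F`-linear endomorphism of `K`. -/
noncomputable def frobPow (i : ℕ) : K →ₗ[F] K where
  toFun x := x ^ Fintype.card F ^ i
  map_add' x y := by
    haveI : Fact (ringChar F).Prime := ⟨CharP.char_is_prime F _⟩
    haveI : CharP K (ringChar F) :=
      charP_of_injective_algebraMap (algebraMap F K).injective _
    obtain ⟨e, hpe, hqe⟩ := FiniteField.card F (ringChar F)
    have hqm : Fintype.card F ^ i = ringChar F ^ ((e : ℕ) * i) := by rw [hqe, ← pow_mul]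
    rw [hqm]
    exact add_pow_char_pow (x := x) (y := y) (ringChar F) ((e : ℕ) * i)
  map_smul' c x := by
    simp only [Algebra.smul_def, RingHom.id_apply, mul_pow, ← map_pow,
      FiniteField.pow_card_pow]

@[simp] lemma frobPow_apply (i : ℕ) (x : K) : frobPow F K i x = x ^ Fintype.card F ^ i := rfl

variable {t : ℕ}

/-- The linearized polynomial map `x ↦ ∑ cᵢ x^(q^i)`. -/
noncomputable def lpol (c : Fin (t + 1) → K) : K →ₗ[F] K :=
  ∑ i : Fin (t + 1), c i • frobPow F K (i : ℕ)

lemma lpol_apply (c : Fin (t + 1) → K) (x : K) :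
    lpol F K c x = ∑ i : Fin (t + 1), c i * x ^ Fintype.card F ^ (i : ℕ) := by
  simp [lpol, LinearMap.sum_apply, LinearMap.smul_apply, smul_eq_mul]

lemma lpol_sub (c c' : Fin (t + 1) → K) : lpol F K (c - c') = lpol F K c - lpol F K c' := by
  simp [lpol, sub_smul, Finset.sum_sub_distrib]
  rw [← Finset.sum_sub_distrib]
  refine Finset.sum_congr rfl fun i _ => ?_
  ext x
  simp [LinearMap.sub_apply, LinearMap.smul_apply, smul_eq_mul, sub_mul]

/-- The associated ordinary polynomial `∑ cᵢ X^(q^i)`. -/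
noncomputable def lpoly (c : Fin (t + 1) → K) : K[X] :=
  ∑ i : Fin (t + 1), C (c i) * X ^ (Fintype.card F ^ (i : ℕ))

lemma lpol_apply_eq_eval (c : Fin (t + 1) → K) (x : K) :
    lpol F K c x = (lpoly F K c).eval x := by
  simp [lpol_apply, lpoly, eval_finset_sum]

lemma lpoly_coeff (c : Fin (t + 1) → K) (j : Fin (t + 1)) :
    (lpoly F K c).coeff (Fintype.card F ^ (j : ℕ)) = c j := by
  have hq1 : 1 < Fintype.card F := Fintype.one_lt_card
  rw [lpoly, finset_sum_coeff]
  rw [Finset.sum_eq_single j]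
  · simp
  · intro i _ hij
    rw [coeff_C_mul, coeff_X_pow, if_neg, mul_zero]
    intro h
    have : (j : ℕ) = i := Nat.pow_right_injective hq1 h
    exact hij (Fin.ext this.symm)
  · simp
  
lemma lpoly_natDegree_le (c : Fin (t + 1) → K) :
    (lpoly F K c).natDegree ≤ Fintype.card F ^ t := by
  refine natDegree_sum_le_of_forall_le _ _ fun i _ => ?_
  refine (natDegree_C_mul_le _ _).trans ?_
  rw [natDegree_X_pow]
  exact Nat.pow_le_pow_right (Nat.one_le_iff_ne_zero.mpr Fintype.card_ne_zero) (Nat.lt_succ_iff.mp i.2)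

lemma lpoly_ne_zero {c : Fin (t + 1) → K} (hc : c ≠ 0) : lpoly F K c ≠ 0 := by
  obtain ⟨j, hj⟩ := Function.ne_iff.mp hc
  intro h
  apply hj
  have := lpoly_coeff F K c j
  rw [h] at this
  simpa using this.symm

variable [FiniteDimensional F K] [Fintype K]

lemma finrank_ker_lpol_le {c : Fin (t + 1) → K} (hc : c ≠ 0) :
    finrank F ↥(ker (lpol F K c)) ≤ t := by
  classical
  have hq1 : 1 < Fintype.card F := Fintype.one_lt_card
  set P := lpoly F K c with hP
  have hP0 : P ≠ 0 := lpoly_ne_zero F K hc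
  -- kernel elements are roots of P
  have hroot : ∀ x : ↥(ker (lpol F K c)), (x : K) ∈ P.roots.toFinset := by
    rintro ⟨x, hx⟩
    rw [Multiset.mem_toFinset, mem_roots hP0]
    rw [LinearMap.mem_ker] at hx
    rw [lpol_apply_eq_eval] at hx
    exact hx
  have hinj : Function.Injective (fun x : ↥(ker (lpol F K c)) =>
      (⟨(x : K), hroot x⟩ : {y // y ∈ P.roots.toFinset})) := by
    intro a b h
    have : (a : K) = b := congrArg (fun y : {y // y ∈ P.roots.toFinset} => (y : K)) h
    exact Subtype.ext this
  have hcard : Fintype.card ↥(ker (lpol F K c)) ≤ Fintype.card F ^ t := by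
    calc Fintype.card ↥(ker (lpol F K c)) ≤ Fintype.card {y // y ∈ P.roots.toFinset} :=
          Fintype.card_le_of_injective _ hinj
      _ = P.roots.toFinset.card := Fintype.card_coe _
      _ ≤ Multiset.card P.roots := Multiset.toFinset_card_le _
      _ ≤ P.natDegree := P.card_roots' 
      _ ≤ Fintype.card F ^ t := lpoly_natDegree_le F K c
  have hker : Fintype.card ↥(ker (lpol F K c)) =
      Fintype.card F ^ finrank F ↥(ker (lpol F K c)) := card_eq_pow_finrank
  rw [hker] at hcard
  exact (Nat.pow_le_pow_iff_right hq1).mp hcard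


end Lin

end Stmt12Aux

/-- Corollary (cf. Gluesing-Luerssen–Troha, Theorem 4.6): for `1 ≤ d ≤ k ≤ min{v₁,v₂}`,
`A_q(v₁+v₂+k, 2d; k) ≥ q^{(v₁+v₂)(k-d+1)} + A_q(v₁,2d;k) + A_q(v₂,2d;k)`. -/
theorem stmt12 (q : ℕ) (F : Type) [Field F] [Fintype F] (hF : Fintype.card F = q)
    (k d v₁ v₂ : ℕ) (hd : 1 ≤ d) (hdk : d ≤ k) (hkv₁ : k ≤ v₁) (hkv₂ : k ≤ v₂) :
    q ^ ((v₁ + v₂) * (k - d + 1)) + Aq F v₁ (2 * d) k + Aq F v₂ (2 * d) k ≤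
      Aq F (v₁ + v₂ + k) (2 * d) k := by
  classical
  open Stmt12Aux Polynomial Module LinearMap in
  subst hF
  set m := v₁ + v₂ with hm_def
  set t := k - d with ht_def
  have hm : m ≠ 0 := by omega
  have hkm : k ≤ m := by omega
  have hq1 : 1 < Fintype.card F := Fintype.one_lt_card
  -- the degree-m extension
  let K : Type := SplittingField (X ^ Fintype.card F ^ m - X : F[X])
  haveI : FiniteDimensional F K := IsSplittingField.finiteDimensional K (X ^ Fintype.card F ^ m - X : F[X])
  haveI : Finite K := Module.finite_of_finite F
  haveI : Fintype K := Fintype.ofFinite _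
  have hK : finrank F K = m := finrank_Kext F m K hm
  -- an injective embedding of F^k into K
  let e1 : (Fin m → F) ≃ₗ[F] K := LinearEquiv.ofFinrankEq _ _ (by
    rw [Module.finrank_fin_fun, hK])
  let ιe : (Fin k → F) →ₗ[F] (Fin m → F) := Function.ExtendByZero.linearMap F (Fin.castLE hkm)
  have hιe_inj : Function.Injective ιe := by
    intro x y h
    funext i
    have h2 := congrFun h (Fin.castLE hkm i)
    simpa [ιe, (Fin.castLE_injective hkm).extend_apply] using h2
  let ι : (Fin k → F) →ₗ[F] K := e1.toLinearMap ∘ₗ ιe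
  have hι : Function.Injective ι := e1.injective.comp hιe_inj
  -- the MRD maps
  let ψ : (Fin (t + 1) → K) → ((Fin k → F) →ₗ[F] K) := fun c => (lpol F K c).comp ι
  have hψker : ∀ c : Fin (t + 1) → K, c ≠ 0 → finrank F ↥(LinearMap.ker (ψ c)) ≤ t := by
    intro c hc
    have h1 : (LinearMap.ker (ψ c)).map ι ≤ LinearMap.ker (lpol F K c) := by
      rintro x ⟨y, hy, rfl⟩
      exact hy
    calc finrank F ↥(LinearMap.ker (ψ c)) = finrank F ↥((LinearMap.ker (ψ c)).map ι) :=
          (finrank_map_of_injective ι hι _).symm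
      _ ≤ finrank F ↥(LinearMap.ker (lpol F K c)) := Submodule.finrank_mono h1
      _ ≤ t := finrank_ker_lpol_le F K hc
  have hψsub : ∀ c c' : Fin (t + 1) → K, ψ c - ψ c' = ψ (c - c') := by
    intro c c'
    show _ = (lpol F K (c - c')).comp ι
    rw [lpol_sub, LinearMap.sub_comp]
  have hψinj : Function.Injective ψ := by
    intro c c' h
    by_contra hne
    have h0 : ψ (c - c') = 0 := by rw [← hψsub, h, sub_self]
    have hk1 : finrank F ↥(LinearMap.ker (ψ (c - c'))) = k := by
      rw [h0, LinearMap.ker_zero, finrank_top, Module.finrank_fin_fun]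
    have hk2 := hψker (c - c') (sub_ne_zero.mpr hne)
    omega
  -- the ambient space
  let M : Type := (Fin k → F) × K
  haveI : FiniteDimensional F M := inferInstanceAs (FiniteDimensional F ((Fin k → F) × K))
  have hMrank : finrank F M = m + k := by
    show finrank F ((Fin k → F) × K) = m + k
    rw [Module.finrank_prod, Module.finrank_fin_fun, hK]
    omega
  -- the lifted MRD code
  let G : (Fin (t + 1) → K) → Submodule F M := fun c => (ψ c).graph
  have hGrank : ∀ c, finrank F ↥(G c) = k := by
    intro c
    show finrank F ↥(ψ c).graph = k
    rw [finrank_graph, Module.finrank_fin_fun]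
  have hGinj : Function.Injective G := fun c c' h => hψinj (graph_injective h)
  have hGdist : ∀ c c', c ≠ c' → 2 * d ≤ gDist (G c) (G c') := by
    intro c c' hne
    refine gDist_ge (hGrank c) (hGrank c') ?_ hdk
    show finrank F ↥((ψ c).graph ⊓ (ψ c').graph) ≤ k - d
    rw [finrank_graph_inf, hψsub]
    exact hψker _ (sub_ne_zero.mpr hne)
  -- the two embedded codes
  let δ : ((Fin v₁ → F) × (Fin v₂ → F)) ≃ₗ[F] K := LinearEquiv.ofFinrankEq _ _ (by
    rw [Module.finrank_prod, Module.finrank_fin_fun, Module.finrank_fin_fun, hK])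
  let j₁ : (Fin v₁ → F) →ₗ[F] M :=
    (LinearMap.inr F (Fin k → F) K).comp (δ.toLinearMap.comp (LinearMap.inl F _ _))
  let j₂ : (Fin v₂ → F) →ₗ[F] M :=
    (LinearMap.inr F (Fin k → F) K).comp (δ.toLinearMap.comp (LinearMap.inr F _ _))
  have hj₁ : Function.Injective j₁ :=
    LinearMap.inr_injective.comp (δ.injective.comp LinearMap.inl_injective)
  have hj₂ : Function.Injective j₂ :=
    LinearMap.inr_injective.comp (δ.injective.comp LinearMap.inr_injective)
  -- trivial intersections
  have hGj₁ : ∀ (c) (S : Submodule F (Fin v₁ → F)), G c ⊓ S.map j₁ = ⊥ := by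
    intro c S
    rw [Submodule.eq_bot_iff]
    intro x hx
    rw [Submodule.mem_inf] at hx
    obtain ⟨hg, hmap⟩ := hx
    obtain ⟨s, hs, rfl⟩ := Submodule.mem_map.mp hmap
    have hj1s : j₁ s = ((0 : Fin k → F), δ (s, 0)) := rfl
    have hg2 : (j₁ s).2 = ψ c (j₁ s).1 := hg
    rw [hj1s] at hg2
    simp only [map_zero] at hg2
    have : (s, (0 : Fin v₂ → F)) = 0 := δ.map_eq_zero_iff.mp hg2
    have hs0 : s = 0 := congrArg Prod.fst this
    rw [hs0, map_zero]
  have hGj₂ : ∀ (c) (S : Submodule F (Fin v₂ → F)), G c ⊓ S.map j₂ = ⊥ := by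
    intro c S
    rw [Submodule.eq_bot_iff]
    intro x hx
    rw [Submodule.mem_inf] at hx
    obtain ⟨hg, hmap⟩ := hx
    obtain ⟨s, hs, rfl⟩ := Submodule.mem_map.mp hmap
    have hj2s : j₂ s = ((0 : Fin k → F), δ (0, s)) := rfl
    have hg2 : (j₂ s).2 = ψ c (j₂ s).1 := hg
    rw [hj2s] at hg2
    simp only [map_zero] at hg2
    have : ((0 : Fin v₁ → F), s) = 0 := δ.map_eq_zero_iff.mp hg2
    have hs0 : s = 0 := congrArg Prod.snd this
    rw [hs0, map_zero]
  have hj₁j₂ : ∀ (S : Submodule F (Fin v₁ → F)) (T : Submodule F (Fin v₂ → F)),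
      S.map j₁ ⊓ T.map j₂ = ⊥ := by
    intro S T
    rw [Submodule.eq_bot_iff]
    intro x hx
    rw [Submodule.mem_inf] at hx
    obtain ⟨h1, h2⟩ := hx
    obtain ⟨s, hs, rfl⟩ := Submodule.mem_map.mp h1
    obtain ⟨u, hu, hux⟩ := Submodule.mem_map.mp h2
    have hδ : δ ((0 : Fin v₁ → F), u) = δ (s, 0) := congrArg Prod.snd hux
    have hsu : ((0 : Fin v₁ → F), u) = (s, (0 : Fin v₂ → F)) := δ.injective hδ
    have hs0 : s = 0 := (congrArg Prod.fst hsu).symm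
    rw [hs0, map_zero]
  -- the codes
  obtain ⟨C₁, hC₁dim, hC₁dist, hC₁card⟩ := aq_attained (F := F) v₁ (2 * d) k
  obtain ⟨C₂, hC₂dim, hC₂dist, hC₂card⟩ := aq_attained (F := F) v₂ (2 * d) k
  let A : Finset (Submodule F M) := Finset.univ.image G
  let B₁ : Finset (Submodule F M) := C₁.image (Submodule.map j₁)
  let B₂ : Finset (Submodule F M) := C₂.image (Submodule.map j₂)
  -- cardinalities
  have hA : A.card = Fintype.card F ^ (m * (t + 1)) := by
    rw [Finset.card_image_of_injective _ hGinj, Finset.card_univ]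
    rw [Fintype.card_fun, Fintype.card_fin]
    rw [card_eq_pow_finrank (K := F) (V := K), hK, ← pow_mul]
  have hB₁ : B₁.card = C₁.card :=
    Finset.card_image_of_injective _ (Submodule.map_injective_of_injective hj₁)
  have hB₂ : B₂.card = C₂.card :=
    Finset.card_image_of_injective _ (Submodule.map_injective_of_injective hj₂)
  -- membership helpers
  have memA : ∀ U ∈ A, ∃ c, G c = U := by
    intro U hU
    obtain ⟨c, -, h⟩ := Finset.mem_image.mp hU
    exact ⟨c, h⟩
  have hBdim₁ : ∀ S ∈ C₁, finrank F ↥(S.map j₁) = k := by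
    intro S hS
    rw [finrank_map_of_injective _ hj₁]
    exact hC₁dim S hS
  have hBdim₂ : ∀ S ∈ C₂, finrank F ↥(S.map j₂) = k := by
    intro S hS
    rw [finrank_map_of_injective _ hj₂]
    exact hC₂dim S hS
  have hk1 : 1 ≤ k := le_trans hd hdk
  -- cross distance helper
  have cross : ∀ U W : Submodule F M, finrank F ↥U = k → finrank F ↥W = k →
      U ⊓ W = ⊥ → 2 * d ≤ gDist U W := by
    intro U W hU hW h
    refine gDist_ge hU hW ?_ hdk
    rw [h, finrank_bot]
    omega
  -- dimension property of the union
  have hdim : ∀ U ∈ A ∪ B₁ ∪ B₂, finrank F ↥U = k := by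
    intro U hU
    rcases Finset.mem_union.mp hU with hU' | hU'
    · rcases Finset.mem_union.mp hU' with hU'' | hU''
      · obtain ⟨c, rfl⟩ := memA U hU''
        exact hGrank c
      · obtain ⟨S, hS, rfl⟩ := Finset.mem_image.mp hU''
        exact hBdim₁ S hS
    · obtain ⟨S, hS, rfl⟩ := Finset.mem_image.mp hU'
      exact hBdim₂ S hS
  -- distance property of the union
  have hdist : ∀ U ∈ A ∪ B₁ ∪ B₂, ∀ W ∈ A ∪ B₁ ∪ B₂, U ≠ W → 2 * d ≤ gDist U W := by
    intro U hU W hW hne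
    have hU3 : (∃ c, G c = U) ∨ (∃ S ∈ C₁, S.map j₁ = U) ∨ (∃ S ∈ C₂, S.map j₂ = U) := by
      rcases Finset.mem_union.mp hU with h | h
      · rcases Finset.mem_union.mp h with h' | h'
        · exact Or.inl (memA U h')
        · obtain ⟨S, hS, h2⟩ := Finset.mem_image.mp h'
          exact Or.inr (Or.inl ⟨S, hS, h2⟩)
      · obtain ⟨S, hS, h2⟩ := Finset.mem_image.mp h
        exact Or.inr (Or.inr ⟨S, hS, h2⟩)
    have hW3 : (∃ c, G c = W) ∨ (∃ S ∈ C₁, S.map j₁ = W) ∨ (∃ S ∈ C₂, S.map j₂ = W) := by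
      rcases Finset.mem_union.mp hW with h | h
      · rcases Finset.mem_union.mp h with h' | h'
        · exact Or.inl (memA W h')
        · obtain ⟨S, hS, h2⟩ := Finset.mem_image.mp h'
          exact Or.inr (Or.inl ⟨S, hS, h2⟩)
      · obtain ⟨S, hS, h2⟩ := Finset.mem_image.mp h
        exact Or.inr (Or.inr ⟨S, hS, h2⟩)
    rcases hU3 with ⟨c, rfl⟩ | ⟨S, hS, rfl⟩ | ⟨S, hS, rfl⟩ <;>
      rcases hW3 with ⟨c', rfl⟩ | ⟨T, hT, rfl⟩ | ⟨T, hT, rfl⟩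
    · exact hGdist c c' (by rintro rfl; exact hne rfl)
    · exact cross _ _ (hGrank c) (hBdim₁ T hT) (hGj₁ c T)
    · exact cross _ _ (hGrank c) (hBdim₂ T hT) (hGj₂ c T)
    · rw [gDist_comm]
      exact cross _ _ (hGrank c') (hBdim₁ S hS) (hGj₁ c' S)
    · rw [gDist_map _ hj₁]
      exact hC₁dist S hS T hT (fun h => hne (by rw [h]))
    · exact cross _ _ (hBdim₁ S hS) (hBdim₂ T hT) (hj₁j₂ S T)
    · rw [gDist_comm]
      exact cross _ _ (hGrank c') (hBdim₂ S hS) (hGj₂ c' S)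
    · rw [gDist_comm]
      exact cross _ _ (hBdim₁ T hT) (hBdim₂ S hS) (hj₁j₂ T S)
    · rw [gDist_map _ hj₂]
      exact hC₂dist S hS T hT (fun h => hne (by rw [h]))
  -- disjointness
  have hAB₁ : Disjoint A B₁ := by
    rw [Finset.disjoint_left]
    intro U hUA hUB
    obtain ⟨c, rfl⟩ := memA U hUA
    obtain ⟨S, hS, hUS⟩ := Finset.mem_image.mp hUB
    exact ne_of_inf_bot (hGrank c) (hGj₁ c S) hk1 hUS.symm
  have hAB₂ : Disjoint A B₂ := by
    rw [Finset.disjoint_left]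
    intro U hUA hUB
    obtain ⟨c, rfl⟩ := memA U hUA
    obtain ⟨S, hS, hUS⟩ := Finset.mem_image.mp hUB
    exact ne_of_inf_bot (hGrank c) (hGj₂ c S) hk1 hUS.symm
  have hB₁B₂ : Disjoint B₁ B₂ := by
    rw [Finset.disjoint_left]
    intro U hUB₁ hUB₂
    obtain ⟨S, hS, rfl⟩ := Finset.mem_image.mp hUB₁
    obtain ⟨T, hT, hUT⟩ := Finset.mem_image.mp hUB₂
    exact ne_of_inf_bot (hBdim₁ S hS) (hj₁j₂ S T) hk1 hUT.symm
  have hcard : (A ∪ B₁ ∪ B₂).card = A.card + B₁.card + B₂.card := by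
    rw [Finset.card_union_of_disjoint (Finset.disjoint_union_left.mpr ⟨hAB₂, hB₁B₂⟩),
      Finset.card_union_of_disjoint hAB₁]
  -- transfer to F^(v₁+v₂+k)
  let E : M ≃ₗ[F] (Fin (m + k) → F) := LinearEquiv.ofFinrankEq _ _ (by
    rw [hMrank, Module.finrank_fin_fun])
  have hfinal := le_aq_of_equiv E (A ∪ B₁ ∪ B₂) hdim hdist
  rw [hcard, hA, hB₁, hB₂, hC₁card, hC₂card] at hfinal
  exact hfinal
end

section
/- Let q ≥ 2 be an integer and b ≥ 0 an integer. Then the limit as a → ∞ (over natural numbers a) of [a+b, b]_q / q^{ab} equals ∏_{i=1}^{b} (1 − q^{−i})^{−1} = 1/(1/q; 1/q)_b, where the quotient is taken in the real numbers. -/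
open Finset Filter

/-- The Gaussian binomial coefficient `[n, b]_q = ∏_{i=1}^{b} (q^{n-b+i}-1)/(q^i-1)`
for `0 ≤ b ≤ n`, and `0` whenever `b > n`, as a real number. -/
noncomputable def gaussR (q n b : ℕ) : ℝ :=
  if b ≤ n then ∏ i ∈ Finset.range b, ((q : ℝ) ^ (n - b + (i + 1)) - 1) / ((q : ℝ) ^ (i + 1) - 1)
  else 0

/-- Lemma (limit of normalized Gaussian binomial coefficients): for an integer `q ≥ 2` and
`b ≥ 0`, `lim_{a→∞} [a+b, b]_q / q^{ab} = ∏_{i=1}^{b} (1 - q^{-i})^{-1} = 1/(1/q;1/q)_b`. -/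
theorem stmt13 (q b : ℕ) (hq : 2 ≤ q) :
    Filter.Tendsto (fun a : ℕ => gaussR q (a + b) b / (q : ℝ) ^ (a * b)) Filter.atTop
      (nhds (∏ i ∈ Finset.range b, (1 - ((q : ℝ))⁻¹ ^ (i + 1))⁻¹)) ∧
    (∏ i ∈ Finset.range b, (1 - ((q : ℝ))⁻¹ ^ (i + 1))⁻¹) =
      (∏ i ∈ Finset.range b, (1 - ((q : ℝ))⁻¹ ^ (i + 1)))⁻¹ := by
  have hq1 : (1 : ℝ) < q := by exact_mod_cast hq.trans_lt' one_lt_two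
  have hq0 : (0 : ℝ) < q := lt_trans one_pos hq1
  have hqne : (q : ℝ) ≠ 0 := ne_of_gt hq0
  have hpne : ∀ i : ℕ, (q : ℝ) ^ (i + 1) - 1 ≠ 0 := fun i => by
    have : (1 : ℝ) < (q : ℝ) ^ (i + 1) := one_lt_pow₀ hq1 (Nat.succ_ne_zero i)
    linarith
  constructor
  · have key : ∀ a : ℕ, gaussR q (a + b) b / (q : ℝ) ^ (a * b) =
        ∏ i ∈ Finset.range b, ((q : ℝ) ^ (i + 1) - ((q : ℝ)⁻¹) ^ a) / ((q : ℝ) ^ (i + 1) - 1) := by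
      intro a
      rw [gaussR, if_pos (Nat.le_add_left b a), Nat.add_sub_cancel, pow_mul,
        show ((q : ℝ) ^ a) ^ b = ∏ _i ∈ Finset.range b, (q : ℝ) ^ a by simp,
        ← Finset.prod_div_distrib]
      refine Finset.prod_congr rfl fun i _ => ?_
      have hpa : (q : ℝ) ^ a ≠ 0 := pow_ne_zero _ hqne
      rw [inv_pow]
      field_simp
      rw [pow_add]
      ring
    simp only [key]
    apply tendsto_finset_prod
    intro i _
    have h0 : Filter.Tendsto (fun a : ℕ => ((q : ℝ)⁻¹) ^ a) Filter.atTop (nhds 0) := by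
      apply tendsto_pow_atTop_nhds_zero_of_lt_one (by positivity)
      rw [inv_lt_one_iff₀]; right; exact hq1
    have := (((tendsto_const_nhds (x := (q : ℝ) ^ (i + 1))).sub h0).div_const ((q : ℝ) ^ (i + 1) - 1))
    convert this using 2
    rw [sub_zero, eq_div_iff (hpne i), inv_pow]
    have hpane : (q : ℝ) ^ (i + 1) ≠ 0 := pow_ne_zero _ hqne
    field_simp
    rw [div_self (hpne i)]
  · exact Finset.prod_inv_distrib _
end

section
/- Let q ≥ 2 be an integer and z ≥ 1 an integer. Define g(s) = q^{sz} / [s+z, z]_q as a real number for integers s ≥ 0. Then g is strictly monotonically decreasing in s, and g(s) converges as s → ∞ to (1/q; 1/q)_z = ∏_{i=1}^{z}(1 − q^{−i}); moreover this limit is greater than 0.288788. (Interpretation: with z = k − d/2 + 1 and s = v − k, g(s) is the size q^{(v−k)(k−d/2+1)} of a lifted MRD code divided by the Singleton bound [v−d/2+1, v−k]_q, for k ≤ v−k.) -/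
open Finset Filter

private lemma one_sub_sum_le_prod_one_sub (x : ℕ → ℝ) (h0 : ∀ i, 0 ≤ x i)
    (h1 : ∀ i, x i ≤ 1) (n : ℕ) :
    1 - ∑ i ∈ Finset.range n, x i ≤ ∏ i ∈ Finset.range n, (1 - x i) := by
  induction n with
  | zero => simp
  | succ n ih =>
    rw [Finset.prod_range_succ, Finset.sum_range_succ]
    have hs : 0 ≤ ∑ i ∈ Finset.range n, x i :=
      Finset.sum_nonneg fun i _ => h0 i
    nlinarith [h0 n, h1 n, ih]

private lemma key_eq (q z : ℕ) (hq : 2 ≤ q) (s : ℕ) :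
    (q : ℝ) ^ (s * z) / gaussR q (s + z) z =
      (∏ i ∈ Finset.range z, (1 - ((q : ℝ))⁻¹ ^ (i + 1))) /
        ∏ i ∈ Finset.range z, (1 - ((q : ℝ))⁻¹ ^ (s + i + 1)) := by
  have hq1 : (1 : ℝ) < (q : ℝ) := by exact_mod_cast hq.trans_lt' one_lt_two
  have hq0 : (q : ℝ) ≠ 0 := by positivity
  have hgauss : gaussR q (s + z) z =
      ∏ i ∈ Finset.range z, ((q : ℝ) ^ (s + i + 1) - 1) / ((q : ℝ) ^ (i + 1) - 1) := by
    rw [gaussR, if_pos (Nat.le_add_left z s)]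
    refine Finset.prod_congr rfl fun i _ => by
      have h : s + z - z + (i + 1) = s + i + 1 := by omega
      rw [h]
  rw [hgauss]
  rw [show (q : ℝ) ^ (s * z) = ∏ _i ∈ Finset.range z, (q : ℝ) ^ s by
    rw [Finset.prod_const, Finset.card_range, ← pow_mul]]
  rw [← Finset.prod_div_distrib, ← Finset.prod_div_distrib]
  refine Finset.prod_congr rfl fun i _ => ?_
  have h1 : (q : ℝ) ^ (s + i + 1) - 1 ≠ 0 := by
    have : (1 : ℝ) < (q : ℝ) ^ (s + i + 1) := one_lt_pow₀ hq1 (by omega)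
    linarith
  have h3 : 1 - ((q : ℝ))⁻¹ ^ (s + i + 1) ≠ 0 := by
    have : ((q : ℝ))⁻¹ ^ (s + i + 1) < 1 :=
      pow_lt_one₀ (by positivity) (inv_lt_one_of_one_lt₀ hq1) (by omega)
    linarith
  rw [div_div_eq_mul_div, div_eq_div_iff h1 h3]
  rw [inv_pow, inv_pow]
  field_simp
  ring

private lemma num25 : (0.288788:ℝ) <
    (∏ i ∈ Finset.range 25, (1-(2:ℝ)⁻¹^(i+1))) * (1 - (2:ℝ)⁻¹^25) := by
  norm_num [Finset.prod_range_succ]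

private lemma half_fac_nonneg (k : ℕ) : (0:ℝ) ≤ 1 - (2:ℝ)⁻¹^(k+1) := by
  have : (2:ℝ)⁻¹^(k+1) ≤ 1 := pow_le_one₀ (by norm_num) (by norm_num)
  linarith

private lemma half_fac_le_one (k : ℕ) : (1 - (2:ℝ)⁻¹^(k+1)) ≤ 1 := by
  have : (0:ℝ) ≤ (2:ℝ)⁻¹^(k+1) := by positivity
  linarith

private lemma prod2_lower (z : ℕ) :
    (0.288788:ℝ) < ∏ i ∈ Finset.range z, (1 - (2:ℝ)⁻¹^(i+1)) := by
  have hnn : ∀ n : ℕ, (0:ℝ) ≤ ∏ i ∈ Finset.range n, (1 - (2:ℝ)⁻¹^(i+1)) :=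
    fun n => Finset.prod_nonneg fun i _ => half_fac_nonneg i
  rcases le_or_gt z 25 with h | h
  · obtain ⟨m, hm⟩ := Nat.exists_eq_add_of_le h
    have h25 : ∏ i ∈ Finset.range 25, (1-(2:ℝ)⁻¹^(i+1)) ≤
        ∏ i ∈ Finset.range z, (1-(2:ℝ)⁻¹^(i+1)) := by
      rw [hm, Finset.prod_range_add]
      have ht : (∏ i ∈ Finset.range m, (1 - (2:ℝ)⁻¹^(z+i+1))) ≤ 1 :=
        Finset.prod_le_one (fun i _ => half_fac_nonneg _) (fun i _ => half_fac_le_one _)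
      exact mul_le_of_le_one_right (hnn z) ht
    calc (0.288788:ℝ) < (∏ i ∈ Finset.range 25, (1-(2:ℝ)⁻¹^(i+1))) * (1 - (2:ℝ)⁻¹^25) :=
          num25
      _ ≤ ∏ i ∈ Finset.range 25, (1-(2:ℝ)⁻¹^(i+1)) :=
          mul_le_of_le_one_right (hnn _) (by norm_num)
      _ ≤ _ := h25
  · obtain ⟨m, rfl⟩ := Nat.exists_eq_add_of_le h.le
    rw [Finset.prod_range_add]
    have hsum : ∑ i ∈ Finset.range m, (2:ℝ)⁻¹^(25+i+1) ≤ (2:ℝ)⁻¹^25 := by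
      have h1 : ∀ i : ℕ, (2:ℝ)⁻¹^(25+i+1) = (2:ℝ)⁻¹^26 * (2:ℝ)⁻¹^i := by
        intro i
        rw [← pow_add]
        congr 1
        omega
      simp only [h1]
      rw [← Finset.mul_sum]
      have hg : ∑ i ∈ Finset.range m, (2:ℝ)⁻¹^i ≤ 2 := by
        have := geom_sum_eq (show (2:ℝ)⁻¹ ≠ 1 by norm_num) m
        rw [this]
        have : (0:ℝ) ≤ (2:ℝ)⁻¹^m := by positivity
        rw [div_le_iff_of_neg (by norm_num : ((2:ℝ)⁻¹ - 1) < 0)]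
        linarith
      calc (2:ℝ)⁻¹^26 * ∑ i ∈ Finset.range m, (2:ℝ)⁻¹^i ≤ (2:ℝ)⁻¹^26 * 2 := by
            have : (0:ℝ) ≤ (2:ℝ)⁻¹^26 := by positivity
            nlinarith
        _ = (2:ℝ)⁻¹^25 := by norm_num
    have tail : 1 - (2:ℝ)⁻¹^25 ≤ ∏ i ∈ Finset.range m, (1 - (2:ℝ)⁻¹^(25+i+1)) := by
      refine le_trans (by linarith [hsum]) (one_sub_sum_le_prod_one_sub
        (fun i => (2:ℝ)⁻¹^(25+i+1)) (fun i => by positivity)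
        (fun i => pow_le_one₀ (by norm_num) (by norm_num)) m)
    calc (0.288788:ℝ) < (∏ i ∈ Finset.range 25, (1-(2:ℝ)⁻¹^(i+1))) * (1 - (2:ℝ)⁻¹^25) :=
          num25
      _ ≤ (∏ i ∈ Finset.range 25, (1-(2:ℝ)⁻¹^(i+1))) *
            ∏ i ∈ Finset.range m, (1 - (2:ℝ)⁻¹^(25+i+1)) :=
          mul_le_mul_of_nonneg_left tail (hnn 25)

/-- Proposition (LMRD code size vs. Singleton bound): for integers `q ≥ 2` and `z ≥ 1`, the
ratio `g(s) = q^{sz} / [s+z, z]_q` is strictly monotonically decreasing in `s` and converges,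
as `s → ∞`, to `(1/q;1/q)_z = ∏_{i=1}^{z} (1 - q^{-i}) > 0.288788`. -/
theorem stmt14 (q z : ℕ) (hq : 2 ≤ q) (hz : 1 ≤ z) :
    StrictAnti (fun s : ℕ => (q : ℝ) ^ (s * z) / gaussR q (s + z) z) ∧
    Filter.Tendsto (fun s : ℕ => (q : ℝ) ^ (s * z) / gaussR q (s + z) z) Filter.atTop
      (nhds (∏ i ∈ Finset.range z, (1 - ((q : ℝ))⁻¹ ^ (i + 1)))) ∧
    (0.288788 : ℝ) < ∏ i ∈ Finset.range z, (1 - ((q : ℝ))⁻¹ ^ (i + 1)) := by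
  have hq1 : (1 : ℝ) < (q : ℝ) := by exact_mod_cast hq.trans_lt' one_lt_two
  have hqi0 : (0:ℝ) < ((q:ℝ))⁻¹ := by positivity
  have hqi1 : ((q:ℝ))⁻¹ < 1 := inv_lt_one_of_one_lt₀ hq1
  have hfacpos : ∀ k : ℕ, (0:ℝ) < 1 - ((q:ℝ))⁻¹ ^ (k+1) := fun k => by
    have : ((q:ℝ))⁻¹^(k+1) < 1 := pow_lt_one₀ hqi0.le hqi1 (Nat.succ_ne_zero k)
    linarith
  have hPpos : (0:ℝ) < ∏ i ∈ Finset.range z, (1 - ((q:ℝ))⁻¹ ^ (i+1)) :=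
    Finset.prod_pos fun i _ => hfacpos i
  have hDpos : ∀ s : ℕ, (0:ℝ) < ∏ i ∈ Finset.range z, (1 - ((q:ℝ))⁻¹ ^ (s+i+1)) :=
    fun s => Finset.prod_pos fun i _ => by
      have := hfacpos (s + i)
      simpa [add_assoc] using this
  refine ⟨?_, ?_, ?_⟩
  · intro s t hst
    simp only [key_eq q z hq]
    have hDlt : ∏ i ∈ Finset.range z, (1 - ((q:ℝ))⁻¹ ^ (s+i+1)) <
        ∏ i ∈ Finset.range z, (1 - ((q:ℝ))⁻¹ ^ (t+i+1)) := by
      refine Finset.prod_lt_prod_of_nonempty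
        (fun i _ => by simpa [add_assoc] using hfacpos (s + i)) (fun i _ => ?_)
        (Finset.nonempty_range_iff.mpr (Nat.one_le_iff_ne_zero.mp hz))
      have : ((q:ℝ))⁻¹ ^ (t+i+1) < ((q:ℝ))⁻¹ ^ (s+i+1) :=
        pow_lt_pow_right_of_lt_one₀ hqi0 hqi1 (by omega)
      linarith
    exact div_lt_div_of_pos_left hPpos (hDpos s) hDlt
  · simp only [key_eq q z hq]
    have hD : Filter.Tendsto
        (fun s : ℕ => ∏ i ∈ Finset.range z, (1 - ((q:ℝ))⁻¹ ^ (s+i+1)))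
        Filter.atTop (nhds 1) := by
      have h1 : (1:ℝ) = ∏ _i ∈ Finset.range z, (1:ℝ) := by simp
      rw [h1]
      refine tendsto_finset_prod _ fun i _ => ?_
      have heq : ∀ s : ℕ, ((q:ℝ))⁻¹ ^ (s+i+1) = ((q:ℝ))⁻¹ ^ s * ((q:ℝ))⁻¹ ^ (i+1) := by
        intro s
        rw [← pow_add]
        congr 1
      have h0 : Filter.Tendsto (fun s : ℕ => ((q:ℝ))⁻¹ ^ (s+i+1)) Filter.atTop (nhds 0) := by
        simp only [heq]
        have := (tendsto_pow_atTop_nhds_zero_of_lt_one hqi0.le hqi1).mul_const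
          (((q:ℝ))⁻¹ ^ (i+1))
        simpa using this
      have := h0.const_sub (1:ℝ)
      simpa using this
    have hc : Filter.Tendsto
        (fun _ : ℕ => ∏ i ∈ Finset.range z, (1 - ((q:ℝ))⁻¹ ^ (i+1)))
        Filter.atTop (nhds (∏ i ∈ Finset.range z, (1 - ((q:ℝ))⁻¹ ^ (i+1)))) :=
      tendsto_const_nhds
    have := hc.div hD one_ne_zero
    rw [div_one] at this
    exact this
  · refine lt_of_lt_of_le (prod2_lower z) (Finset.prod_le_prod ?_ ?_)
    · exact fun i _ => half_fac_nonneg i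
    · intro i _
      have hle : ((q:ℝ))⁻¹ ≤ (2:ℝ)⁻¹ := by
        apply inv_anti₀ (by norm_num)
        exact_mod_cast hq
      have : ((q:ℝ))⁻¹ ^ (i+1) ≤ (2:ℝ)⁻¹ ^ (i+1) :=
        pow_le_pow_left₀ hqi0.le hle (i+1)
      linarith
end

section
/- Let q ≥ 2 be an integer and let k, d be integers with d even and 4 ≤ d ≤ 2k. For integers v ≥ 2k define the real number g(v) = q^{(v−k)(k−d/2+1)} · [v−k+d/2−1, d/2−1]_q / [v, k]_q (the size of a lifted MRD code divided by the Anticode bound). Then g is strictly monotonically decreasing in v, and g(v) converges as v → ∞ to (1/q; 1/q)_k / (1/q; 1/q)_{d/2−1}; moreover this limit satisfies (1/q;1/q)_k/(1/q;1/q)_{d/2−1} ≥ (q/(q−1)) · (1/q;1/q)_k > 0.577576. -/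
open Finset Filter

/-- The `q`-Pochhammer value `(1/q; 1/q)_n = ∏_{i=1}^{n} (1 - q^{-i})` as a real number. -/
noncomputable def qPoch (q n : ℕ) : ℝ := ∏ i ∈ Finset.range n, (1 - ((q : ℝ))⁻¹ ^ (i + 1))

/-- The ratio of the size `q^{(v-k)(k-d/2+1)}` of a lifted MRD code to the Anticode bound
`[v,k]_q / [v-k+d/2-1, d/2-1]_q`. -/
noncomputable def lmrdAnticodeRatio (q k d v : ℕ) : ℝ :=
  (q : ℝ) ^ ((v - k) * (k - d / 2 + 1)) * gaussR q (v - k + d / 2 - 1) (d / 2 - 1) / gaussR q v k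

variable {q : ℕ}

lemma qinv_half (hq : 2 ≤ q) : (q:ℝ)⁻¹ ≤ 1/2 := by
  rw [inv_le_comm₀ (by positivity) (by norm_num)]
  · norm_num; exact_mod_cast hq
  all_goals norm_num

lemma factor_pos (hq : 2 ≤ q) (i : ℕ) : 0 < 1 - ((q:ℝ))⁻¹ ^ (i+1) := by
  have h := qinv_half hq
  have h0 : (0:ℝ) ≤ (q:ℝ)⁻¹ := by positivity
  have : ((q:ℝ))⁻¹ ^ (i+1) ≤ (1/2:ℝ)^(i+1) := pow_le_pow_left₀ h0 h _
  have : ((1:ℝ)/2)^(i+1) ≤ 1/2 := by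
    calc ((1:ℝ)/2)^(i+1) ≤ (1/2)^1 := pow_le_pow_of_le_one (by norm_num) (by norm_num) (by omega)
    _ = 1/2 := by norm_num
  linarith

lemma qPoch_pos (hq : 2 ≤ q) (n : ℕ) : 0 < qPoch q n :=
  Finset.prod_pos fun i _ => factor_pos hq i

lemma qPoch_succ (n : ℕ) : qPoch q (n+1) = qPoch q n * (1 - ((q:ℝ))⁻¹ ^ (n+1)) :=
  Finset.prod_range_succ _ _

lemma qPoch_le_one (hq : 2 ≤ q) (n : ℕ) : qPoch q n ≤ 1 :=
  Finset.prod_le_one (fun i _ => (factor_pos hq i).le)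
    (fun i _ => by have h : (0:ℝ) ≤ ((q:ℝ))⁻¹ ^ (i+1) := by positivity
                   linarith)

lemma qPoch_anti (hq : 2 ≤ q) : Antitone (qPoch q) := by
  apply antitone_nat_of_succ_le
  intro n
  rw [qPoch_succ]
  have h1 := qPoch_pos hq n
  have h2 : (0:ℝ) ≤ ((q:ℝ))⁻¹ ^ (n+1) := by positivity
  nlinarith

lemma qPoch_add (a b : ℕ) :
    qPoch q (a + b) = qPoch q a * ∏ i ∈ Finset.range b, (1 - ((q:ℝ))⁻¹ ^ (a + (i+1))) := by
  rw [qPoch, Finset.prod_range_add]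
  simp [qPoch, add_assoc]

lemma pow_sub_one (hq : 2 ≤ q) (e : ℕ) :
    (q:ℝ) ^ e - 1 = (q:ℝ) ^ e * (1 - ((q:ℝ))⁻¹ ^ e) := by
  have hq0 : (q:ℝ) ≠ 0 := by positivity
  rw [mul_sub, mul_one, ← mul_pow, mul_inv_cancel₀ hq0, one_pow]

lemma gaussR_eq (hq : 2 ≤ q) {n b : ℕ} (h : b ≤ n) :
    gaussR q n b = (q:ℝ) ^ (b * (n - b)) *
      (qPoch q n / (qPoch q (n - b) * qPoch q b)) := by
  have hq0 : (q:ℝ) ≠ 0 := by positivity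
  have key : ∀ i ∈ Finset.range b,
      ((q : ℝ) ^ (n - b + (i + 1)) - 1) / ((q : ℝ) ^ (i + 1) - 1)
      = (q:ℝ) ^ (n-b) * ((1 - ((q:ℝ))⁻¹ ^ (n - b + (i+1))) / (1 - ((q:ℝ))⁻¹ ^ (i+1))) := by
    intro i _
    rw [pow_sub_one hq, pow_sub_one hq, pow_add]
    have h1 : ((q:ℝ)) ^ (i+1) ≠ 0 := by positivity
    have h2 : (1 - ((q:ℝ))⁻¹ ^ (i+1)) ≠ 0 := ne_of_gt (factor_pos hq i)
    field_simp
  have h3 : qPoch q (n-b) ≠ 0 := ne_of_gt (qPoch_pos hq _)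
  have hprod : (∏ i ∈ Finset.range b, (1 - ((q:ℝ))⁻¹ ^ (n - b + (i+1)))) = qPoch q n / qPoch q (n-b) := by
    have hadd : qPoch q n = qPoch q (n-b) * ∏ i ∈ Finset.range b, (1 - ((q:ℝ))⁻¹ ^ (n - b + (i+1))) := by
      rw [← qPoch_add, Nat.sub_add_cancel h]
    rw [hadd]
    field_simp
  have hb : (∏ i ∈ Finset.range b, (1 - ((q:ℝ))⁻¹ ^ (i+1))) = qPoch q b := rfl
  rw [gaussR, if_pos h, Finset.prod_congr rfl key, Finset.prod_mul_distrib,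
    Finset.prod_const, Finset.prod_div_distrib, hprod, hb, Finset.card_range, ← pow_mul, mul_comm (n-b) b, div_div]

lemma ratio_eq (hq : 2 ≤ q) {k d v : ℕ} (hd2 : 2 ∣ d) (hd4 : 4 ≤ d) (hdk : d ≤ 2 * k)
    (hv : 2 * k ≤ v) :
    lmrdAnticodeRatio q k d v
      = qPoch q k * qPoch q (v - k + (d / 2 - 1)) / (qPoch q (d / 2 - 1) * qPoch q v) := by
  set m := d / 2 - 1 with hm
  have hmk : m + 1 ≤ k := by omega
  have hm1 : 1 ≤ m := by omega
  have e1 : v - k + d / 2 - 1 = v - k + m := by omega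
  have e2 : k - d / 2 + 1 = k - m := by omega
  have hmn : m ≤ v - k + m := by omega
  have hkv : k ≤ v := by omega
  have e3 : v - k + m - m = v - k := by omega
  rw [lmrdAnticodeRatio, e1, e2, gaussR_eq hq hmn, gaussR_eq hq hkv, e3]
  have hpow : (q:ℝ)^((v-k)*(k-m)) * (q:ℝ)^(m*(v-k)) = (q:ℝ)^(k*(v-k)) := by
    rw [← pow_add]
    congr 1
    rw [mul_comm m (v-k), ← Nat.mul_add, Nat.sub_add_cancel (by omega), mul_comm]
  have p1 : qPoch q (v-k) ≠ 0 := ne_of_gt (qPoch_pos hq _)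
  have p2 : qPoch q m ≠ 0 := ne_of_gt (qPoch_pos hq _)
  have p3 : qPoch q v ≠ 0 := ne_of_gt (qPoch_pos hq _)
  have p4 : qPoch q k ≠ 0 := ne_of_gt (qPoch_pos hq _)
  have p5 : (q:ℝ) ≠ 0 := by positivity
  field_simp
  linear_combination (qPoch q (v-k+m)) * hpow

lemma qPoch_ge (hq : 2 ≤ q) (n : ℕ) : 1/8 ≤ qPoch q n := by
  have ht0 : (0:ℝ) ≤ (q:ℝ)⁻¹ := by positivity
  have ht : (q:ℝ)⁻¹ ≤ 1/2 := qinv_half hq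
  match n with
  | 0 => norm_num [qPoch]
  | 1 =>
    have h1 : qPoch q 1 = 1 - (q:ℝ)⁻¹ := by simp [qPoch]
    rw [h1]; linarith
  | (n+2) =>
    have aux : ∀ j : ℕ, 1/8 + ((q:ℝ)⁻¹)^(j+2) ≤ qPoch q (j+2) := by
      intro j
      induction j with
      | zero =>
        have : qPoch q 2 = (1 - (q:ℝ)⁻¹) * (1 - ((q:ℝ)⁻¹)^2) := by
          simp [qPoch, Finset.prod_range_succ]
        rw [this]
        nlinarith [mul_nonneg (by linarith : (0:ℝ) ≤ 1/2 - (q:ℝ)⁻¹)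
          (by nlinarith : (0:ℝ) ≤ 7/4 + (3/2)*(q:ℝ)⁻¹ - ((q:ℝ)⁻¹)^2)]
      | succ j ih =>
        have hs : qPoch q (j+3) = qPoch q (j+2) * (1 - ((q:ℝ)⁻¹)^(j+3)) := qPoch_succ _
        have ha0 : (0:ℝ) ≤ ((q:ℝ)⁻¹)^(j+2) := by positivity
        have ha : ((q:ℝ)⁻¹)^(j+2) ≤ 1/4 := by
          calc ((q:ℝ)⁻¹)^(j+2) ≤ ((q:ℝ)⁻¹)^2 :=
            pow_le_pow_of_le_one ht0 (by linarith) (by omega)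
          _ ≤ (1/2:ℝ)^2 := by nlinarith
          _ = 1/4 := by norm_num
        have hx : ((q:ℝ)⁻¹)^(j+3) = ((q:ℝ)⁻¹)^(j+2) * (q:ℝ)⁻¹ := by ring
        rw [hs, hx]
        nlinarith [mul_nonneg ha0 ht0, mul_nonneg (mul_nonneg ha0 ha0) ht0,
          qPoch_le_one hq (j+2), qPoch_pos hq (j+2)]
    have := aux n
    have : (0:ℝ) ≤ ((q:ℝ)⁻¹)^(n+2) := by positivity
    linarith [aux n]

noncomputable def Tprod (n : ℕ) : ℝ := ∏ i ∈ Finset.range n, (1 - ((2:ℝ))⁻¹ ^ (i + 2))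

lemma T_anti : Antitone Tprod := by
  apply antitone_nat_of_succ_le
  intro n
  rw [Tprod, Finset.prod_range_succ, ← Tprod]
  have h1 : (0:ℝ) < Tprod n := Finset.prod_pos (fun i _ => by
    have : ((2:ℝ))⁻¹ ^ (i+2) ≤ ((2:ℝ))⁻¹ ^ 2 :=
      pow_le_pow_of_le_one (by norm_num) (by norm_num) (by omega)
    norm_num at this ⊢
    linarith)
  have h2 : (0:ℝ) ≤ ((2:ℝ))⁻¹ ^ (n+2) := by positivity
  nlinarith

lemma T_le_one (n : ℕ) : Tprod n ≤ 1 := by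
  apply Finset.prod_le_one
  · intro i _
    have : ((2:ℝ))⁻¹ ^ (i+2) ≤ ((2:ℝ))⁻¹ ^ 2 :=
      pow_le_pow_of_le_one (by norm_num) (by norm_num) (by omega)
    norm_num at this ⊢
    linarith
  · intro i _
    have : (0:ℝ) ≤ ((2:ℝ))⁻¹ ^ (i+2) := by positivity
    linarith

lemma T_pos (n : ℕ) : (0:ℝ) < Tprod n :=
  Finset.prod_pos (fun i _ => by
    have : ((2:ℝ))⁻¹ ^ (i+2) ≤ ((2:ℝ))⁻¹ ^ 2 :=
      pow_le_pow_of_le_one (by norm_num) (by norm_num) (by omega)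
    norm_num at this ⊢
    linarith)

lemma T_tail (n : ℕ) : Tprod 23 - ((2:ℝ))⁻¹ ^ 24 ≤ Tprod n := by
  have smono : Monotone (fun n => Tprod n - ((2:ℝ))⁻¹ ^ (n+1)) := by
    apply monotone_nat_of_le_succ
    intro n
    have hTs : Tprod (n+1) = Tprod n * (1 - ((2:ℝ))⁻¹ ^ (n+2)) := Finset.prod_range_succ _ _
    have h1 := T_le_one n
    have h0 := T_pos n
    have h2 : (0:ℝ) ≤ ((2:ℝ))⁻¹ ^ (n+1) := by positivity
    have h3 : ((2:ℝ))⁻¹ ^ (n+2) = ((2:ℝ))⁻¹ ^ (n+1) * 2⁻¹ := by ring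
    rw [hTs, h3]
    nlinarith
  rcases le_or_gt 23 n with h | h
  · have h1 := smono h
    simp only at h1
    have h2 : (0:ℝ) ≤ ((2:ℝ))⁻¹ ^ (n+1) := by positivity
    have h3 : ((2:ℝ))⁻¹ ^ (23+1) = ((2:ℝ))⁻¹ ^ 24 := by norm_num
    linarith
  · have h1 : Tprod 23 ≤ Tprod n := T_anti h.le
    have h2 : (0:ℝ) ≤ ((2:ℝ))⁻¹ ^ 24 := by positivity
    linarith

lemma T23_num : (0.577576 : ℝ) < Tprod 23 - ((2:ℝ))⁻¹ ^ 24 := by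
  rw [Tprod]
  norm_num [Finset.prod_range_succ]

lemma qPoch_tendsto (hq : 2 ≤ q) : ∃ L : ℝ, 1/8 ≤ L ∧ Tendsto (qPoch q) atTop (nhds L) := by
  have hbdd : BddBelow (Set.range (qPoch q)) := ⟨1/8, by rintro x ⟨n, rfl⟩; exact qPoch_ge hq n⟩
  exact ⟨⨅ n, qPoch q n, le_ciInf (qPoch_ge hq), tendsto_atTop_ciInf (qPoch_anti hq) hbdd⟩

lemma part_c (hq : 2 ≤ q) {k m : ℕ} (hm : 1 ≤ m) :
    ((q:ℝ)/((q:ℝ)-1)) * qPoch q k ≤ qPoch q k / qPoch q m := by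
  have hp := qPoch_pos hq m
  have hk := qPoch_pos hq k
  have hq1 : (1:ℝ) < (q:ℝ) := by
    have : (2:ℝ) ≤ (q:ℝ) := by exact_mod_cast hq
    linarith
  have hm1 : qPoch q m ≤ 1 - (q:ℝ)⁻¹ := by
    have h2 := qPoch_anti hq hm
    have h1 : qPoch q 1 = 1 - (q:ℝ)⁻¹ := by simp [qPoch]
    rw [h1] at h2
    exact h2
  rw [le_div_iff₀ hp]
  have key : ((q:ℝ)/((q:ℝ)-1)) * (1 - (q:ℝ)⁻¹) = 1 := by
    have hq0' : (q:ℝ) ≠ 0 := by positivity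
    rw [div_mul_eq_mul_div, mul_sub, mul_one, mul_inv_cancel₀ hq0',
      div_eq_one_iff_eq (by linarith : (q:ℝ)-1 ≠ 0)]
  have ha : 0 < (q:ℝ)/((q:ℝ)-1) := by
    apply div_pos (by linarith) (by linarith)
  have h2 := mul_le_mul_of_nonneg_left hm1 (mul_pos ha hk).le
  nlinarith [h2, key]

lemma part_d (hq : 2 ≤ q) {k : ℕ} (hk : 2 ≤ k) :
    (0.577576:ℝ) < ((q:ℝ)/((q:ℝ)-1)) * qPoch q k := by
  have hq1 : (1:ℝ) < (q:ℝ) := by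
    have : (2:ℝ) ≤ (q:ℝ) := by exact_mod_cast hq
    linarith
  have hq0 : (q:ℝ) ≠ 0 := by positivity
  have hsplit : qPoch q k = (∏ i ∈ Finset.range (k-1), (1 - ((q:ℝ))⁻¹^(i+2))) * (1 - (q:ℝ)⁻¹) := by
    have hk1 : k = (k-1)+1 := by omega
    rw [hk1, qPoch, Finset.prod_range_succ']
    simp [add_assoc]
  have key : ((q:ℝ)/((q:ℝ)-1)) * (1 - (q:ℝ)⁻¹) = 1 := by
    have hq0' : (q:ℝ) ≠ 0 := by positivity
    rw [div_mul_eq_mul_div, mul_sub, mul_one, mul_inv_cancel₀ hq0',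
      div_eq_one_iff_eq (by linarith : (q:ℝ)-1 ≠ 0)]
  have heq : ((q:ℝ)/((q:ℝ)-1)) * qPoch q k = ∏ i ∈ Finset.range (k-1), (1 - ((q:ℝ))⁻¹^(i+2)) := by
    rw [hsplit]
    calc ((q:ℝ)/((q:ℝ)-1)) * ((∏ i ∈ Finset.range (k-1), (1 - ((q:ℝ))⁻¹^(i+2))) * (1 - (q:ℝ)⁻¹))
        = (∏ i ∈ Finset.range (k-1), (1 - ((q:ℝ))⁻¹^(i+2))) * (((q:ℝ)/((q:ℝ)-1)) * (1 - (q:ℝ)⁻¹)) := by ring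
      _ = _ := by rw [key, mul_one]
  rw [heq]
  have hTk : Tprod (k-1) ≤ ∏ i ∈ Finset.range (k-1), (1 - ((q:ℝ))⁻¹^(i+2)) := by
    rw [Tprod]
    apply Finset.prod_le_prod
    · intro i _
      have : ((2:ℝ))⁻¹ ^ (i+2) ≤ ((2:ℝ))⁻¹ ^ 2 :=
        pow_le_pow_of_le_one (by norm_num) (by norm_num) (by omega)
      norm_num at this ⊢
      linarith
    · intro i _
      have h1 : (0:ℝ) ≤ (q:ℝ)⁻¹ := by positivity
      have h2 : ((q:ℝ))⁻¹ ^ (i+2) ≤ ((2:ℝ))⁻¹ ^ (i+2) := by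
        apply pow_le_pow_left₀ h1
        rw [show ((2:ℝ))⁻¹ = 1/2 by norm_num]
        exact qinv_half hq
      linarith
  linarith [T_tail (k-1), T23_num]

/-- Proposition (LMRD code size vs. Anticode bound): for an integer `q ≥ 2`, `d` even with
`4 ≤ d ≤ 2k`, the ratio `g(v) = q^{(v-k)(k-d/2+1)} · [v-k+d/2-1, d/2-1]_q / [v,k]_q` is
strictly monotonically decreasing for `v ≥ 2k` and converges, as `v → ∞`, to
`(1/q;1/q)_k / (1/q;1/q)_{d/2-1} ≥ (q/(q-1)) · (1/q;1/q)_k > 0.577576`. -/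
theorem stmt15 (q k d : ℕ) (hq : 2 ≤ q) (hd2 : 2 ∣ d) (hd4 : 4 ≤ d) (hdk : d ≤ 2 * k) :
    (∀ v : ℕ, 2 * k ≤ v → lmrdAnticodeRatio q k d (v + 1) < lmrdAnticodeRatio q k d v) ∧
    Filter.Tendsto (fun v : ℕ => lmrdAnticodeRatio q k d v) Filter.atTop
      (nhds (qPoch q k / qPoch q (d / 2 - 1))) ∧
    ((q : ℝ) / ((q : ℝ) - 1)) * qPoch q k ≤ qPoch q k / qPoch q (d / 2 - 1) ∧
    (0.577576 : ℝ) < ((q : ℝ) / ((q : ℝ) - 1)) * qPoch q k := by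
  have hm1 : 1 ≤ d / 2 - 1 := by omega
  have hk2 : 2 ≤ k := by omega
  have hqi0 : (0:ℝ) < (q:ℝ)⁻¹ := by
    apply inv_pos.2
    exact_mod_cast Nat.lt_of_lt_of_le Nat.zero_lt_two hq
  have hqi1 : (q:ℝ)⁻¹ < 1 := by
    have := qinv_half hq
    linarith
  refine ⟨?_, ?_, part_c hq hm1, part_d hq hk2⟩
  · -- strict decrease
    intro v hv
    have hv' : 2 * k ≤ v + 1 := by omega
    rw [ratio_eq hq hd2 hd4 hdk hv', ratio_eq hq hd2 hd4 hdk hv]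
    have e : v + 1 - k + (d/2 - 1) = (v - k + (d/2 - 1)) + 1 := by omega
    rw [e, qPoch_succ, qPoch_succ]
    have hPk := qPoch_pos hq k
    have hP1 := qPoch_pos hq (v - k + (d/2 - 1))
    have hPm := qPoch_pos hq (d/2 - 1)
    have hPv := qPoch_pos hq v
    have hx := factor_pos hq (v - k + (d/2 - 1))
    have hy := factor_pos hq v
    have hlt : (q:ℝ)⁻¹ ^ (v + 1) < (q:ℝ)⁻¹ ^ ((v - k + (d/2 - 1)) + 1) := by
      apply pow_lt_pow_right_of_lt_one₀ hqi0 hqi1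
      omega
    rw [div_lt_div_iff₀ (by positivity) (by positivity)]
    nlinarith [mul_pos (mul_pos (mul_pos hPk hP1) hPm) hPv,
      mul_pos (mul_pos hPk hP1) (mul_pos hPm hPv)]
  · -- convergence
    obtain ⟨L, hL8, hLt⟩ := qPoch_tendsto hq
    have hL0 : L ≠ 0 := by linarith
    have h1 : Tendsto (fun v : ℕ => v - k + (d/2 - 1)) atTop atTop := by
      apply tendsto_atTop_mono (fun v => Nat.le_add_right (v - k) (d/2 - 1))
      exact tendsto_sub_atTop_nat k
    have hN : Tendsto (fun v : ℕ => qPoch q (v - k + (d/2 - 1))) atTop (nhds L) := hLt.comp h1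
    have hPm := qPoch_pos hq (d/2 - 1)
    have hmain : Tendsto
        (fun v : ℕ => qPoch q k * qPoch q (v - k + (d/2 - 1)) / (qPoch q (d/2 - 1) * qPoch q v))
        atTop (nhds (qPoch q k * L / (qPoch q (d/2 - 1) * L))) := by
      apply Tendsto.div (hN.const_mul _) (hLt.const_mul _)
      intro hcon
      rcases mul_eq_zero.1 hcon with h | h
      · exact (ne_of_gt hPm) h
      · exact hL0 h
    have heq : qPoch q k * L / (qPoch q (d/2 - 1) * L) = qPoch q k / qPoch q (d/2 - 1) :=
      mul_div_mul_right _ _ hL0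
    rw [heq] at hmain
    apply hmain.congr'
    filter_upwards [eventually_ge_atTop (2*k)] with v hv
    rw [ratio_eq hq hd2 hd4 hdk hv]
end

section
/- Let q be a prime power, d an even positive integer, and k, v₀, s integers with 1 ≤ k ≤ v₀, k ≤ s, 2s ≥ d, and d ≤ 2k. Write a(n) = A_q(n, d; k), b = q^{s(k−d/2+1)}, and s' = s − d/2 + k. Then the limit as l → ∞ of ( b^l · a(v₀) + a(s') · (b^l − 1)/(b − 1) ) / ( [v₀+ls, k]_q / [v₀+ls−k+d/2−1, d/2−1]_q ) equals ( a(v₀) + a(s')/(q^{s(k−d/2+1)} − 1) ) / q^{(v₀−k)(k−d/2+1)} · ∏_{i=d/2}^{k} (1 − q^{−i}). -/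
open Finset Filter

/-- Proposition (ratio of the arithmetic-progression linkage lower bound to the Anticode
bound): with `a(n) = A_q(n,d;k)`, `b = q^{s(k-d/2+1)}` and `s' = s-d/2+k`, the ratio
`(b^l a(v₀) + a(s')·(b^l-1)/(b-1)) / ([v₀+ls, k]_q / [v₀+ls-k+d/2-1, d/2-1]_q)` converges,
as `l → ∞`, to `(a(v₀) + a(s')/(q^{s(k-d/2+1)}-1)) / q^{(v₀-k)(k-d/2+1)} · ∏_{i=d/2}^{k} (1-q^{-i})`. -/
theorem stmt16 (q : ℕ) (F : Type) [Field F] [Fintype F] (hF : Fintype.card F = q)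
    (k d v₀ s : ℕ) (hd0 : 0 < d) (hd2 : 2 ∣ d)
    (hk : 1 ≤ k) (hkv : k ≤ v₀) (hks : k ≤ s) (hs : d ≤ 2 * s) (hdk : d ≤ 2 * k) :
    Filter.Tendsto
      (fun l : ℕ =>
        (((q : ℝ) ^ (s * (k - d / 2 + 1))) ^ l * (Aq F v₀ d k : ℝ) +
            (Aq F (s - d / 2 + k) d k : ℝ) *
              ((((q : ℝ) ^ (s * (k - d / 2 + 1))) ^ l - 1) /
                ((q : ℝ) ^ (s * (k - d / 2 + 1)) - 1))) /
          (gaussR q (v₀ + l * s) k / gaussR q (v₀ + l * s - k + d / 2 - 1) (d / 2 - 1)))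
      Filter.atTop
      (nhds
        (((Aq F v₀ d k : ℝ) +
            (Aq F (s - d / 2 + k) d k : ℝ) / ((q : ℝ) ^ (s * (k - d / 2 + 1)) - 1)) /
            (q : ℝ) ^ ((v₀ - k) * (k - d / 2 + 1)) *
          ∏ i ∈ Finset.Icc (d / 2) k, (1 - ((q : ℝ))⁻¹ ^ i))) := by
  have hq2 : 2 ≤ q := hF ▸ Fintype.one_lt_card
  have hq1 : (1:ℝ) < (q:ℝ) := by exact_mod_cast hq2
  have hq0 : (0:ℝ) < (q:ℝ) := lt_trans one_pos hq1
  have he1 : 1 ≤ d / 2 := by omega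
  have hek : d / 2 ≤ k := by omega
  set e := d / 2 with he_def
  set A : ℝ := (Aq F v₀ d k : ℝ) with hA
  set B : ℝ := (Aq F (s - e + k) d k : ℝ) with hB
  set b : ℝ := (q:ℝ) ^ (s * (k - e + 1)) with hbdef
  have hs1 : 1 ≤ s := le_trans hk hks
  have hb1 : (1:ℝ) < b := one_lt_pow₀ hq1 (Nat.mul_ne_zero (by omega) (by omega))
  have hbne : b ≠ 0 := by positivity
  have hbm1 : b - 1 ≠ 0 := sub_ne_zero.mpr hb1.ne'
  have hqs1 : (1:ℝ) < (q:ℝ) ^ s := one_lt_pow₀ hq1 (by omega)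
  have hden : ∀ i : ℕ, (q:ℝ) ^ (i+1) - 1 ≠ 0 := fun i =>
    sub_ne_zero.mpr (one_lt_pow₀ hq1 (Nat.succ_ne_zero i)).ne'
  -- the limit factor functions
  set M : ℕ → ℝ := fun l => A + B * ((1 - (b⁻¹) ^ l) / (b - 1)) with hM
  set Q : ℕ → ℝ := fun l => ∏ i ∈ Finset.Ico (e-1) k,
      (((q:ℝ) ^ ((v₀ - k) + (i+1)) - (((q:ℝ) ^ s)⁻¹) ^ l) / ((q:ℝ) ^ (i+1) - 1)) with hQ
  -- Step 1: the Gaussian ratio as a product over Ico (e-1) k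
  have hgauss : ∀ l : ℕ, gaussR q (v₀ + l * s) k / gaussR q (v₀ + l * s - k + e - 1) (e-1)
      = ∏ i ∈ Finset.Ico (e-1) k,
        (((q:ℝ) ^ (v₀ + l * s - k + (i+1)) - 1) / ((q:ℝ) ^ (i+1) - 1)) := by
    intro l
    have hn : k ≤ v₀ + l * s := le_trans hkv (Nat.le_add_right _ _)
    rw [gaussR, if_pos hn, gaussR, if_pos (by omega)]
    have harg : v₀ + l * s - k + e - 1 - (e-1) = v₀ + l * s - k := by omega
    rw [harg]
    have hmul : (∏ i ∈ Finset.range (e-1),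
          (((q:ℝ) ^ (v₀ + l * s - k + (i+1)) - 1) / ((q:ℝ) ^ (i+1) - 1))) *
        (∏ i ∈ Finset.Ico (e-1) k,
          (((q:ℝ) ^ (v₀ + l * s - k + (i+1)) - 1) / ((q:ℝ) ^ (i+1) - 1)))
        = ∏ i ∈ Finset.range k,
          (((q:ℝ) ^ (v₀ + l * s - k + (i+1)) - 1) / ((q:ℝ) ^ (i+1) - 1)) :=
      Finset.prod_range_mul_prod_Ico _ (by omega)
    rw [← hmul]
    have hpos : (0:ℝ) < ∏ i ∈ Finset.range (e-1),
        (((q:ℝ) ^ (v₀ + l * s - k + (i+1)) - 1) / ((q:ℝ) ^ (i+1) - 1)) := by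
      apply Finset.prod_pos
      intro i _
      apply div_pos
      · exact sub_pos.mpr (one_lt_pow₀ hq1 (by omega))
      · exact sub_pos.mpr (one_lt_pow₀ hq1 (Nat.succ_ne_zero i))
    exact mul_div_cancel_left₀ _ hpos.ne'
  -- Step 2: the denominator product equals b^l * Q l
  have hPQ : ∀ l : ℕ, (∏ i ∈ Finset.Ico (e-1) k,
      (((q:ℝ) ^ (v₀ + l * s - k + (i+1)) - 1) / ((q:ℝ) ^ (i+1) - 1))) = b ^ l * Q l := by
    intro l
    have hbl : b ^ l = ∏ _i ∈ Finset.Ico (e-1) k, ((q:ℝ) ^ s) ^ l := by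
      rw [Finset.prod_const, Nat.card_Ico, hbdef]
      have h1 : k - (e - 1) = k - e + 1 := by omega
      rw [h1, ← pow_mul, ← pow_mul, ← pow_mul]
      ring_nf
    rw [hQ, hbl, ← Finset.prod_mul_distrib]
    apply Finset.prod_congr rfl
    intro i _
    have hexp : v₀ + l * s - k + (i+1) = l * s + ((v₀ - k) + (i+1)) := by omega
    have hne : ((q:ℝ) ^ s) ^ l ≠ 0 := by positivity
    rw [hexp, pow_add, mul_comm l s, pow_mul, inv_pow, ← mul_div_assoc, mul_sub,
      mul_inv_cancel₀ hne]
  -- Step 3: numerator equals b^l * M l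
  have hNM : ∀ l : ℕ, b ^ l * A + B * ((b ^ l - 1) / (b - 1)) = b ^ l * M l := by
    intro l
    have hbl : (b:ℝ) ^ l ≠ 0 := pow_ne_zero _ hbne
    simp only [hM]
    rw [inv_pow]
    field_simp
  -- Step 4: pointwise identification of the function
  have key : ∀ l : ℕ,
      (b ^ l * A + B * ((b ^ l - 1) / (b - 1))) /
        (gaussR q (v₀ + l * s) k / gaussR q (v₀ + l * s - k + e - 1) (e-1))
      = M l / Q l := by
    intro l
    rw [hgauss l, hPQ l, hNM l, mul_div_mul_left _ _ (pow_ne_zero l hbne)]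
  -- Step 5: limits
  have hMlim : Tendsto M atTop (nhds (A + B * ((1 - 0) / (b - 1)))) := by
    have h0 : Tendsto (fun l : ℕ => (b⁻¹) ^ l) atTop (nhds 0) :=
      tendsto_pow_atTop_nhds_zero_of_lt_one (by positivity) (inv_lt_one_of_one_lt₀ hb1)
    exact tendsto_const_nhds.add
      (((tendsto_const_nhds.sub h0).div_const (b - 1)).const_mul B)
  have hQlim : Tendsto Q atTop (nhds (∏ i ∈ Finset.Ico (e-1) k,
      (((q:ℝ) ^ ((v₀ - k) + (i+1)) - 0) / ((q:ℝ) ^ (i+1) - 1)))) := by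
    apply tendsto_finset_prod
    intro i _
    have h0 : Tendsto (fun l : ℕ => (((q:ℝ) ^ s)⁻¹) ^ l) atTop (nhds 0) :=
      tendsto_pow_atTop_nhds_zero_of_lt_one (by positivity) (inv_lt_one_of_one_lt₀ hqs1)
    exact (tendsto_const_nhds.sub h0).div_const _
  have hQinfpos : (0:ℝ) < ∏ i ∈ Finset.Ico (e-1) k,
      (((q:ℝ) ^ ((v₀ - k) + (i+1)) - 0) / ((q:ℝ) ^ (i+1) - 1)) := by
    apply Finset.prod_pos
    intro i _
    apply div_pos
    · rw [sub_zero]; positivity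
    · exact sub_pos.mpr (one_lt_pow₀ hq1 (Nat.succ_ne_zero i))
  have hmain : Tendsto (fun l => M l / Q l) atTop
      (nhds ((A + B * ((1 - 0) / (b - 1))) / ∏ i ∈ Finset.Ico (e-1) k,
        (((q:ℝ) ^ ((v₀ - k) + (i+1)) - 0) / ((q:ℝ) ^ (i+1) - 1)))) :=
    hMlim.div hQlim hQinfpos.ne'
  -- Step 6: identify the limit point
  have hreind : ∀ f : ℕ → ℝ, ∏ j ∈ Finset.Icc e k, f j = ∏ i ∈ Finset.Ico (e-1) k, f (i+1) := by
    intro f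
    rw [← Finset.Ico_add_one_right_eq_Icc, Finset.prod_Ico_eq_prod_range, Finset.prod_Ico_eq_prod_range]
    have h1 : k + 1 - e = k - (e-1) := by omega
    rw [h1]
    apply Finset.prod_congr rfl
    intro i _
    congr 1
    omega
  have hfac : ∀ i : ℕ, ((q:ℝ) ^ ((v₀ - k) + (i+1)) - 0) / ((q:ℝ) ^ (i+1) - 1)
      = (q:ℝ) ^ (v₀ - k) * (1 - ((q:ℝ)⁻¹) ^ (i+1))⁻¹ := by
    intro i
    have h1 : (1:ℝ) - ((q:ℝ)⁻¹) ^ (i+1) ≠ 0 := by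
      have h0 : ((q:ℝ)⁻¹) ^ (i+1) < 1 :=
        pow_lt_one₀ (by positivity) (inv_lt_one_of_one_lt₀ hq1) (Nat.succ_ne_zero i)
      exact sub_ne_zero.mpr (ne_of_gt h0)
    have h2 : (q:ℝ) ^ (i+1) - 1 ≠ 0 := hden i
    have h3 : (1:ℝ) - ((q:ℝ)⁻¹) ^ (i+1) = ((q:ℝ) ^ (i+1) - 1) / (q:ℝ) ^ (i+1) := by
      rw [inv_pow, sub_div, div_self (pow_ne_zero _ hq0.ne'), one_div]
    rw [sub_zero, h3, inv_div, pow_add]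
    ring
  have hQinf : (∏ i ∈ Finset.Ico (e-1) k,
      (((q:ℝ) ^ ((v₀ - k) + (i+1)) - 0) / ((q:ℝ) ^ (i+1) - 1)))
      = (q:ℝ) ^ ((v₀ - k) * (k - e + 1)) *
        (∏ i ∈ Finset.Ico (e-1) k, (1 - ((q:ℝ)⁻¹) ^ (i+1)))⁻¹ := by
    have hcard : (Finset.Ico (e-1) k).card = k - e + 1 := by
      rw [Nat.card_Ico]; omega
    rw [show ((q:ℝ)) ^ ((v₀ - k) * (k - e + 1)) = ∏ _i ∈ Finset.Ico (e-1) k, (q:ℝ) ^ (v₀ - k) by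
        rw [Finset.prod_const, hcard, ← pow_mul]]
    rw [← Finset.prod_inv_distrib, ← Finset.prod_mul_distrib]
    exact Finset.prod_congr rfl (fun i _ => hfac i)
  have hPne : (∏ i ∈ Finset.Ico (e-1) k, (1 - ((q:ℝ)⁻¹) ^ (i+1))) ≠ 0 := by
    apply Finset.prod_ne_zero_iff.mpr
    intro i _
    have h0 : ((q:ℝ)⁻¹) ^ (i+1) < 1 :=
      pow_lt_one₀ (by positivity) (inv_lt_one_of_one_lt₀ hq1) (Nat.succ_ne_zero i)
    exact sub_ne_zero.mpr (ne_of_gt h0)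
  have hpt : (A + B * ((1 - 0) / (b - 1))) / (∏ i ∈ Finset.Ico (e-1) k,
      (((q:ℝ) ^ ((v₀ - k) + (i+1)) - 0) / ((q:ℝ) ^ (i+1) - 1)))
      = (A + B / (b - 1)) / (q:ℝ) ^ ((v₀ - k) * (k - e + 1)) *
        ∏ i ∈ Finset.Icc e k, (1 - ((q:ℝ)⁻¹) ^ i) := by
    rw [hQinf, hreind (fun j => 1 - ((q:ℝ)⁻¹) ^ j)]
    rw [sub_zero, mul_one_div]
    rw [div_mul_eq_div_div, div_eq_mul_inv _ (_)⁻¹, inv_inv]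
  rw [← hpt]
  exact hmain.congr (fun l => (key l).symm)
end
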